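/- arXiv:2204.10269 — 4 statements merged into one kernel-verified Lean document; each statement's English description precedes it below -/
import Mathlib

section
/- Let d ≥ 1, let μ be the normalized (probability) Haar measure on the unitary group U(d), and let e₀ ∈ ℂ^d be a fixed unit vector. Then for every complex d×d matrix A, ∫_{U(d)} |⟨W e₀, A (W e₀)⟩|² dμ(W) = (|Tr(A)|² + Tr(A A†)) / (d(d+1)). -/
open MeasureTheory Matrix
open scoped ComplexConjugate

noncomputable instance {m : Type*} [Fintype m] [DecidableEq m] :
    MeasurableSpace (Matrix.unitaryGroup m ℂ) := borel _

instance {m : Type*} [Fintype m] [DecidableEq m] :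
    BorelSpace (Matrix.unitaryGroup m ℂ) := ⟨rfl⟩

instance {m : Type*} [Fintype m] [DecidableEq m] :
    CompactSpace (Matrix.unitaryGroup m ℂ) := by
  apply isCompact_iff_compactSpace.mp
  have hclosed : IsClosed (Matrix.unitaryGroup m ℂ : Set (Matrix m m ℂ)) := by
    have : (Matrix.unitaryGroup m ℂ : Set (Matrix m m ℂ)) =
        (fun A : Matrix m m ℂ => A * star A) ⁻¹' {1} := by
      ext A
      simp [Matrix.mem_unitaryGroup_iff]
    rw [this]
    exact IsClosed.preimage (continuous_id.matrix_mul continuous_star) isClosed_singleton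
  have hsub : (Matrix.unitaryGroup m ℂ : Set (Matrix m m ℂ)) ⊆
      Set.pi Set.univ (fun _ : m => Set.pi Set.univ
        (fun _ : m => Metric.closedBall (0:ℂ) 1)) := by
    intro A hA i _ j _
    simpa using entry_norm_bound_of_unitary hA i j
  exact IsCompact.of_isClosed_subset
    (isCompact_univ_pi fun _ => isCompact_univ_pi fun _ => isCompact_closedBall 0 1)
    hclosed hsub

instance {m : Type*} [Fintype m] [DecidableEq m] :
    MeasurableMul (Matrix.unitaryGroup m ℂ) := by
  constructor
  · intro c
    apply Continuous.measurable
    apply continuous_induced_rng.2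
    have h : (Subtype.val ∘ fun x : Matrix.unitaryGroup m ℂ => c * x)
        = fun x : Matrix.unitaryGroup m ℂ => (c : Matrix m m ℂ) * (x : Matrix m m ℂ) := rfl
    rw [h]
    exact continuous_const.matrix_mul continuous_subtype_val
  · intro c
    apply Continuous.measurable
    apply continuous_induced_rng.2
    have h : (Subtype.val ∘ fun x : Matrix.unitaryGroup m ℂ => x * c)
        = fun x : Matrix.unitaryGroup m ℂ => (x : Matrix m m ℂ) * (c : Matrix m m ℂ) := rfl
    rw [h]
    exact continuous_subtype_val.matrix_mul continuous_const

set_option linter.unusedSectionVars false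
noncomputable section
namespace HaarMoment

variable {d : ℕ}

/-- The random pure state `W e₀`. -/
def ψ (e₀ : Fin d → ℂ) (W : Matrix.unitaryGroup (Fin d) ℂ) : Fin d → ℂ :=
  (W : Matrix (Fin d) (Fin d) ℂ) *ᵥ e₀

/-- Basic degree-(2,2) monomial in the state. -/
def F (e₀ : Fin d → ℂ) (i j k l : Fin d) (W : Matrix.unitaryGroup (Fin d) ℂ) : ℂ :=
  conj (ψ e₀ W i) * ψ e₀ W j * ψ e₀ W k * conj (ψ e₀ W l)

lemma continuous_psi (e₀ : Fin d → ℂ) (i : Fin d) :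
    Continuous fun W : Matrix.unitaryGroup (Fin d) ℂ => ψ e₀ W i := by
  exact (continuous_apply i).comp
    (continuous_subtype_val.matrix_mulVec continuous_const)

lemma continuous_F (e₀ : Fin d → ℂ) (i j k l : Fin d) : Continuous (F e₀ i j k l) := by
  unfold F
  exact (((continuous_star.comp (continuous_psi e₀ i)).mul (continuous_psi e₀ j)).mul
    (continuous_psi e₀ k)).mul (continuous_star.comp (continuous_psi e₀ l))

variable (μ : Measure (Matrix.unitaryGroup (Fin d) ℂ)) [IsProbabilityMeasure μ]

lemma integrable_F (e₀ : Fin d → ℂ) (i j k l : Fin d) : Integrable (F e₀ i j k l) μ :=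
  (continuous_F e₀ i j k l).integrable_of_hasCompactSupport
    (HasCompactSupport.of_compactSpace _)

/-- The basic moment. -/
noncomputable def M (e₀ : Fin d → ℂ) (i j k l : Fin d) : ℂ := ∫ W, F e₀ i j k l W ∂μ

variable [μ.IsMulLeftInvariant]

lemma psi_mul (e₀ : Fin d → ℂ) (U W : Matrix.unitaryGroup (Fin d) ℂ) :
    ψ e₀ (U * W) = (U : Matrix (Fin d) (Fin d) ℂ) *ᵥ ψ e₀ W := by
  unfold ψ
  rw [Matrix.UnitaryGroup.mul_val, ← Matrix.mulVec_mulVec]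

lemma M_inv (e₀ : Fin d → ℂ) (U : Matrix.unitaryGroup (Fin d) ℂ) (i j k l : Fin d) :
    M μ e₀ i j k l =
      ∫ W, conj (((U : Matrix (Fin d) (Fin d) ℂ) *ᵥ ψ e₀ W) i) *
          ((U : Matrix (Fin d) (Fin d) ℂ) *ᵥ ψ e₀ W) j *
          ((U : Matrix (Fin d) (Fin d) ℂ) *ᵥ ψ e₀ W) k *
          conj (((U : Matrix (Fin d) (Fin d) ℂ) *ᵥ ψ e₀ W) l) ∂μ := by
  have := integral_mul_left_eq_self (μ := μ) (F e₀ i j k l) U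
  rw [M, ← this]
  apply integral_congr_ae
  filter_upwards with W
  rw [F, psi_mul]


lemma M_phase (e₀ : Fin d → ℂ) (z : Fin d → ℂ) (hz : ∀ p, z p * conj (z p) = 1)
    (i j k l : Fin d) :
    M μ e₀ i j k l = (conj (z i) * z j * z k * conj (z l)) * M μ e₀ i j k l := by
  have hmem : Matrix.diagonal z ∈ Matrix.unitaryGroup (Fin d) ℂ := by
    rw [Matrix.mem_unitaryGroup_iff, Matrix.star_eq_conjTranspose,
      Matrix.diagonal_conjTranspose, Matrix.diagonal_mul_diagonal]
    have hfun : (fun p => z p * star z p) = fun _ : Fin d => (1:ℂ) :=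
      funext fun p => by simpa using hz p
    rw [hfun]
    exact Matrix.diagonal_one
  have h := M_inv μ e₀ ⟨Matrix.diagonal z, hmem⟩ i j k l
  conv_lhs => rw [h]
  have : ∀ W, conj ((Matrix.diagonal z *ᵥ ψ e₀ W) i) * (Matrix.diagonal z *ᵥ ψ e₀ W) j *
      (Matrix.diagonal z *ᵥ ψ e₀ W) k * conj ((Matrix.diagonal z *ᵥ ψ e₀ W) l)
      = (conj (z i) * z j * z k * conj (z l)) * F e₀ i j k l W := by
    intro W
    simp only [Matrix.mulVec_diagonal, _root_.map_mul, F]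
    ring
  rw [MeasureTheory.integral_congr_ae (Filter.Eventually.of_forall this)]
  rw [MeasureTheory.integral_const_mul]
  rfl

lemma M_zero_of_phase (e₀ : Fin d → ℂ) (i j k l : Fin d) (p₀ : Fin d)
    (hC : conj (if i = p₀ then Complex.I else 1) * (if j = p₀ then Complex.I else 1) *
      (if k = p₀ then Complex.I else 1) * conj (if l = p₀ then Complex.I else 1) ≠ 1) :
    M μ e₀ i j k l = 0 := by
  set z : Fin d → ℂ := fun p => if p = p₀ then Complex.I else 1 with hzdef
  have hz : ∀ p, z p * conj (z p) = 1 := by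
    intro p
    by_cases h : p = p₀ <;> simp [hzdef, h]
  have h := M_phase μ e₀ z hz i j k l
  by_contra hM
  apply hC
  have h' : (1 : ℂ) * M μ e₀ i j k l
      = (conj (z i) * z j * z k * conj (z l)) * M μ e₀ i j k l := by
    rw [one_mul]; exact h
  have := mul_right_cancel₀ hM h'
  exact this.symm

lemma I_ne_one' : ¬ (Complex.I = 1) := by
  intro h
  have := congrArg Complex.im h
  simp at this

lemma neg_I_ne_one' : ¬ (-Complex.I = 1) := by
  intro h
  have := congrArg Complex.im h
  simp at this

lemma M_zero (e₀ : Fin d → ℂ) (i j k l : Fin d)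
    (h : ¬((i = j ∧ k = l) ∨ (i = k ∧ l = j))) : M μ e₀ i j k l = 0 := by
  obtain ⟨h1, h2⟩ := not_or.mp h
  rcases eq_or_ne i j with hij | hij
  · have hkl : k ≠ l := fun hkk => h1 ⟨hij, hkk⟩
    apply M_zero_of_phase μ e₀ i j k l k
    subst hij
    rcases eq_or_ne i k with hik | hik <;>
      simp [hik, (Ne.symm hkl), Complex.ext_iff]
  · rcases eq_or_ne i k with hik | hik
    · have hlj : l ≠ j := fun hl => h2 ⟨hik, hl⟩
      have hkj : k ≠ j := fun hkj => hij (hik.trans hkj)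
      apply M_zero_of_phase μ e₀ i j k l j
      simp [hij, hkj, hlj, Complex.ext_iff]
    · apply M_zero_of_phase μ e₀ i j k l i
      have hji := Ne.symm hij
      have hki := Ne.symm hik
      rcases eq_or_ne l i with hli | hli <;>
        simp [hji, hki, hli, Complex.ext_iff] <;> norm_num


/-- Permutation matrix. -/
def permMat (σ : Equiv.Perm (Fin d)) : Matrix (Fin d) (Fin d) ℂ :=
  Matrix.of fun p q => if σ q = p then 1 else 0

lemma permMat_mulVec (σ : Equiv.Perm (Fin d)) (v : Fin d → ℂ) (p : Fin d) :
    (permMat σ *ᵥ v) p = v (σ⁻¹ p) := by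
  simp only [Matrix.mulVec, dotProduct, permMat, Matrix.of_apply]
  rw [Finset.sum_eq_single (σ⁻¹ p)]
  · simp
  · intro q _ hq
    rw [if_neg, zero_mul]
    intro hEq
    exact hq (by rw [← hEq]; simp)
  · intro h
    exact absurd (Finset.mem_univ _) h

lemma permMat_mem (σ : Equiv.Perm (Fin d)) : permMat σ ∈ Matrix.unitaryGroup (Fin d) ℂ := by
  rw [Matrix.mem_unitaryGroup_iff]
  ext p q
  rw [Matrix.mul_apply]
  rw [Finset.sum_eq_single (σ⁻¹ p)]
  · simp only [permMat, Matrix.of_apply, Matrix.star_apply, Matrix.one_apply]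
    simp [eq_comm]
  · intro r _ hr
    have : σ r ≠ p := fun hEq => hr (by rw [← hEq]; simp)
    simp [permMat, this]
  · intro h
    exact absurd (Finset.mem_univ _) h

lemma M_perm (e₀ : Fin d → ℂ) (σ : Equiv.Perm (Fin d)) (i j k l : Fin d) :
    M μ e₀ i j k l = M μ e₀ (σ⁻¹ i) (σ⁻¹ j) (σ⁻¹ k) (σ⁻¹ l) := by
  rw [M_inv μ e₀ ⟨permMat σ, permMat_mem σ⟩ i j k l]
  apply integral_congr_ae
  filter_upwards with W
  simp only [permMat_mulVec]
  rfl

lemma Q_offdiag_const (e₀ : Fin d → ℂ) (x y x' y' : Fin d) (hxy : x ≠ y) (hx'y' : x' ≠ y') :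
    M μ e₀ x x y y = M μ e₀ x' x' y' y' := by
  set σ₁ := Equiv.swap x' x with hσ₁
  set σ : Equiv.Perm (Fin d) := (Equiv.swap (σ₁ y') y) * σ₁ with hσ
  have hx : σ x' = x := by
    have h1 : σ₁ x' = x := Equiv.swap_apply_left x' x
    have hne1 : x ≠ σ₁ y' := by
      intro hEq
      apply_fun σ₁ at hEq
      simp only [hσ₁, Equiv.swap_apply_self, Equiv.swap_apply_right] at hEq
      exact hx'y' hEq
    rw [hσ, Equiv.Perm.mul_apply, h1]
    exact Equiv.swap_apply_of_ne_of_ne hne1 hxy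
  have hy : σ y' = y := by
    rw [hσ, Equiv.Perm.mul_apply]
    exact Equiv.swap_apply_left _ _
  have hix : σ⁻¹ x = x' := by rw [← hx]; simp
  have hiy : σ⁻¹ y = y' := by rw [← hy]; simp
  rw [M_perm μ e₀ σ x x y y, hix, hiy]

lemma Q_diag_const (e₀ : Fin d → ℂ) (x x' : Fin d) :
    M μ e₀ x x x x = M μ e₀ x' x' x' x' := by
  have := M_perm μ e₀ (Equiv.swap x' x) x x x x
  rw [this]
  simp [Equiv.swap_apply_left]

lemma psi_norm (e₀ : Fin d → ℂ) (he₀ : star e₀ ⬝ᵥ e₀ = 1)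
    (W : Matrix.unitaryGroup (Fin d) ℂ) :
    ∑ x, conj (ψ e₀ W x) * ψ e₀ W x = 1 := by
  have h : star (ψ e₀ W) ⬝ᵥ ψ e₀ W = 1 := by
    unfold ψ
    rw [Matrix.star_mulVec, ← Matrix.dotProduct_mulVec, Matrix.mulVec_mulVec]
    rw [show ((W : Matrix (Fin d) (Fin d) ℂ))ᴴ * (W : Matrix (Fin d) (Fin d) ℂ) = 1 from by
      rw [← Matrix.star_eq_conjTranspose]; exact Matrix.UnitaryGroup.star_mul_self W]
    rw [Matrix.one_mulVec]
    exact he₀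
  simpa [dotProduct, Pi.star_apply, Complex.star_def] using h

lemma M_sum (e₀ : Fin d → ℂ) (he₀ : star e₀ ⬝ᵥ e₀ = 1) :
    ∑ x : Fin d, ∑ y : Fin d, M μ e₀ x x y y = 1 := by
  have h1 : ∀ x : Fin d, (∑ y : Fin d, M μ e₀ x x y y) = ∫ W, ∑ y, F e₀ x x y y W ∂μ := by
    intro x
    rw [integral_finset_sum _ (fun y _ => integrable_F μ e₀ x x y y)]
    rfl
  calc ∑ x : Fin d, ∑ y : Fin d, M μ e₀ x x y y
      = ∑ x : Fin d, ∫ W, ∑ y, F e₀ x x y y W ∂μ := Finset.sum_congr rfl fun x _ => h1 x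
    _ = ∫ W, ∑ x, ∑ y, F e₀ x x y y W ∂μ := by
        rw [integral_finset_sum]
        intro x _
        exact integrable_finset_sum _ fun y _ => integrable_F μ e₀ x x y y
    _ = ∫ _W, (1:ℂ) ∂μ := by
        apply integral_congr_ae
        filter_upwards with W
        have hfact : ∑ x : Fin d, ∑ y : Fin d, F e₀ x x y y W
            = (∑ x, conj (ψ e₀ W x) * ψ e₀ W x) * (∑ y, conj (ψ e₀ W y) * ψ e₀ W y) := by
          rw [Finset.sum_mul_sum]
          exact Finset.sum_congr rfl fun x _ => Finset.sum_congr rfl fun y _ => by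
            rw [F]; ring
        rw [hfact, psi_norm e₀ he₀, one_mul]
    _ = 1 := by simp


lemma sum_pair_support (x y : Fin d) (hxy : x ≠ y) (f : Fin d → ℂ)
    (h : ∀ r, r ≠ x → r ≠ y → f r = 0) : ∑ r, f r = f x + f y := by
  rw [← Finset.sum_pair hxy]
  apply (Finset.sum_subset (Finset.subset_univ _) _).symm
  intro b _ hb
  simp only [Finset.mem_insert, Finset.mem_singleton, not_or] at hb
  exact h b hb.1 hb.2

/-- A real rotation acting on coordinates `x, y`, with rational entries. -/
def rot (x y : Fin d) : Matrix (Fin d) (Fin d) ℂ := Matrix.of fun p q =>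
  if p = x then (if q = x then ((3/5 : ℝ) : ℂ) else if q = y then ((4/5 : ℝ) : ℂ) else 0)
  else if p = y then (if q = x then ((4/5 : ℝ) : ℂ) else if q = y then ((-3/5 : ℝ) : ℂ) else 0)
  else if p = q then 1 else 0

lemma rot_x (x y q : Fin d) :
    rot x y x q = if q = x then ((3/5 : ℝ) : ℂ) else if q = y then ((4/5 : ℝ) : ℂ) else 0 := by
  simp [rot]

lemma rot_y (x y q : Fin d) (hxy : x ≠ y) :
    rot x y y q = if q = x then ((4/5 : ℝ) : ℂ) else if q = y then ((-3/5 : ℝ) : ℂ) else 0 := by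
  simp [rot, Ne.symm hxy]

lemma rot_other (x y p q : Fin d) (hpx : p ≠ x) (hpy : p ≠ y) :
    rot x y p q = if p = q then 1 else 0 := by
  simp [rot, hpx, hpy]

lemma rot_mem (x y : Fin d) (hxy : x ≠ y) : rot x y ∈ Matrix.unitaryGroup (Fin d) ℂ := by
  rw [Matrix.mem_unitaryGroup_iff]
  ext p q
  rw [Matrix.mul_apply]
  simp only [Matrix.star_apply]
  by_cases hp : p = x ∨ p = y
  · have hvan : ∀ r : Fin d, r ≠ x → r ≠ y → rot x y p r * star (rot x y q r) = 0 := by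
      intro r hrx hry
      rcases hp with h | h <;> rw [h]
      · rw [rot_x, if_neg hrx, if_neg hry, zero_mul]
      · rw [rot_y _ _ _ hxy, if_neg hrx, if_neg hry, zero_mul]
    rw [sum_pair_support x y hxy _ hvan]
    by_cases hq : q = x ∨ q = y
    · rcases hp with h | h <;> rcases hq with h' | h' <;> rw [h, h'] <;>
        simp only [rot_x, rot_y _ _ _ hxy] <;>
        simp [hxy, Ne.symm hxy, Matrix.one_apply, Complex.star_def, Complex.conj_ofReal] <;>
        norm_num
    · push_neg at hq
      obtain ⟨hq1, hq2⟩ := hq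
      have hpq : p ≠ q := by
        rcases hp with h | h <;> rw [h]
        · exact fun hh => hq1 hh.symm
        · exact fun hh => hq2 hh.symm
      rw [rot_other _ _ _ _ hq1 hq2, rot_other _ _ _ _ hq1 hq2, if_neg hq1, if_neg hq2,
        Matrix.one_apply_ne hpq]
      simp
  · push_neg at hp
    obtain ⟨hp1, hp2⟩ := hp
    rw [Finset.sum_eq_single p]
    · rw [rot_other _ _ _ _ hp1 hp2, if_pos rfl, one_mul]
      by_cases hq1 : q = x
      · rw [hq1, rot_x, if_neg hp1, if_neg hp2, Matrix.one_apply_ne hp1]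
        simp
      · by_cases hq2 : q = y
        · rw [hq2, rot_y _ _ _ hxy, if_neg hp1, if_neg hp2, Matrix.one_apply_ne hp2]
          simp
        · rw [rot_other _ _ _ _ hq1 hq2, Matrix.one_apply]
          by_cases h : q = p
          · rw [if_pos h, if_pos h.symm]
            simp
          · rw [if_neg h, if_neg (fun hh : p = q => h hh.symm)]
            simp
    · intro r _ hr
      rw [rot_other _ _ _ _ hp1 hp2, if_neg (fun h : p = r => hr h.symm), zero_mul]
    · intro h
      exact absurd (Finset.mem_univ _) h


lemma rot_mulVec_x (x y : Fin d) (hxy : x ≠ y) (v : Fin d → ℂ) :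
    (rot x y *ᵥ v) x = ((3/5:ℝ):ℂ) * v x + ((4/5:ℝ):ℂ) * v y := by
  simp only [Matrix.mulVec, dotProduct]
  rw [sum_pair_support x y hxy _
    (fun r hrx hry => by rw [rot_x, if_neg hrx, if_neg hry, zero_mul])]
  rw [rot_x, rot_x]
  simp [hxy, Ne.symm hxy]

lemma M_cross (e₀ : Fin d → ℂ) (x y : Fin d) : M μ e₀ x y x y = M μ e₀ x x y y := by
  apply integral_congr_ae
  filter_upwards with W
  unfold F
  ring

lemma M_diag_two (e₀ : Fin d → ℂ) (x y : Fin d) (hxy : x ≠ y) :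
    M μ e₀ x x x x = 2 * M μ e₀ x x y y := by
  have hyx : y ≠ x := Ne.symm hxy
  set T : Finset (Fin d) := {x, y} with hT
  set co : Fin d → ℂ := fun p => if p = x then ((3/5:ℝ):ℂ) else ((4/5:ℝ):ℂ) with hco
  have hrw := M_inv μ e₀ ⟨rot x y, rot_mem x y hxy⟩ x x x x
  have hpt : ∀ W, conj ((rot x y *ᵥ ψ e₀ W) x) * ((rot x y *ᵥ ψ e₀ W) x) *
      ((rot x y *ᵥ ψ e₀ W) x) * conj ((rot x y *ᵥ ψ e₀ W) x)
      = ∑ p ∈ T ×ˢ (T ×ˢ (T ×ˢ T)),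
          (co p.1 * co p.2.1 * co p.2.2.1 * co p.2.2.2) *
            F e₀ p.1 p.2.1 p.2.2.1 p.2.2.2 W := by
    intro W
    rw [rot_mulVec_x x y hxy]
    simp only [Finset.sum_product, hT, Finset.sum_pair hxy]
    simp only [hco, if_pos rfl, if_neg hyx]
    simp only [F, map_add, _root_.map_mul, Complex.conj_ofReal]
    ring
  have h2 : M μ e₀ x x x x = ∑ p ∈ T ×ˢ (T ×ˢ (T ×ˢ T)),
      (co p.1 * co p.2.1 * co p.2.2.1 * co p.2.2.2) *
        M μ e₀ p.1 p.2.1 p.2.2.1 p.2.2.2 := by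
    rw [hrw]
    trans (∫ W, ∑ p ∈ T ×ˢ (T ×ˢ (T ×ˢ T)),
        (co p.1 * co p.2.1 * co p.2.2.1 * co p.2.2.2) *
          F e₀ p.1 p.2.1 p.2.2.1 p.2.2.2 W ∂μ)
    · exact integral_congr_ae (Filter.Eventually.of_forall fun W => hpt W)
    · rw [integral_finset_sum _
        (fun p _ => ((integrable_F μ e₀ p.1 p.2.1 p.2.2.1 p.2.2.2).const_mul _))]
      exact Finset.sum_congr rfl fun p _ => MeasureTheory.integral_const_mul _ _
  have hA' : M μ e₀ y y y y = M μ e₀ x x x x := Q_diag_const μ e₀ y x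
  have hB' : M μ e₀ y y x x = M μ e₀ x x y y := Q_offdiag_const μ e₀ y x x y hyx hxy
  have hC1 : M μ e₀ x y x y = M μ e₀ x x y y := M_cross μ e₀ x y
  have hC2 : M μ e₀ y x y x = M μ e₀ x x y y := (M_cross μ e₀ y x).trans hB'
  have z1 : M μ e₀ x x x y = 0 := M_zero μ e₀ _ _ _ _ (by simp [hxy, hyx])
  have z2 : M μ e₀ x x y x = 0 := M_zero μ e₀ _ _ _ _ (by simp [hxy, hyx])
  have z3 : M μ e₀ x y x x = 0 := M_zero μ e₀ _ _ _ _ (by simp [hxy, hyx])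
  have z4 : M μ e₀ x y y x = 0 := M_zero μ e₀ _ _ _ _ (by simp [hxy, hyx])
  have z5 : M μ e₀ x y y y = 0 := M_zero μ e₀ _ _ _ _ (by simp [hxy, hyx])
  have z6 : M μ e₀ y x x x = 0 := M_zero μ e₀ _ _ _ _ (by simp [hxy, hyx])
  have z7 : M μ e₀ y x x y = 0 := M_zero μ e₀ _ _ _ _ (by simp [hxy, hyx])
  have z8 : M μ e₀ y x y y = 0 := M_zero μ e₀ _ _ _ _ (by simp [hxy, hyx])
  have z9 : M μ e₀ y y x y = 0 := M_zero μ e₀ _ _ _ _ (by simp [hxy, hyx])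
  have z10 : M μ e₀ y y y x = 0 := M_zero μ e₀ _ _ _ _ (by simp [hxy, hyx])
  rw [Finset.sum_product] at h2
  simp only [Finset.sum_product, hT, Finset.sum_pair hxy] at h2
  simp only [hco, if_pos rfl, if_neg hyx] at h2
  rw [hA', hB', hC1, hC2, z1, z2, z3, z4, z5, z6, z7, z8, z9, z10] at h2
  push_cast at h2
  linear_combination (625/288 : ℂ) * h2


lemma M_offdiag_value (e₀ : Fin d → ℂ) (he₀ : star e₀ ⬝ᵥ e₀ = 1) (x y : Fin d) (hxy : x ≠ y) :
    M μ e₀ x x y y = 1 / ((d:ℂ) * ((d:ℂ)+1)) := by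
  have hsum := M_sum μ e₀ he₀
  set B := M μ e₀ x x y y with hB
  have hterm : ∀ u v : Fin d, M μ e₀ u u v v = B + if u = v then B else 0 := by
    intro u v
    by_cases h : u = v
    · rw [h, if_pos rfl]
      rw [Q_diag_const μ e₀ v x, M_diag_two μ e₀ x y hxy]
      ring
    · rw [if_neg h, add_zero]
      exact Q_offdiag_const μ e₀ u v x y h hxy
  simp_rw [hterm] at hsum
  simp only [Finset.sum_add_distrib, Finset.sum_const, Finset.card_univ, Fintype.card_fin,
    Finset.sum_ite_eq, Finset.mem_univ, if_true] at hsum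
  simp only [nsmul_eq_mul] at hsum
  have hd0 : ((d:ℂ) * ((d:ℂ) + 1)) ≠ 0 := by
    have hd : 0 < d := x.pos
    have h1 : ((d:ℂ)) ≠ 0 := Nat.cast_ne_zero.mpr hd.ne'
    have h2 : ((d:ℂ) + 1) ≠ 0 := by
      have : ((d:ℂ) + 1) = ((d + 1 : ℕ) : ℂ) := by push_cast; ring
      rw [this]
      exact Nat.cast_ne_zero.mpr (Nat.succ_ne_zero d)
    exact mul_ne_zero h1 h2
  rw [eq_div_iff hd0]
  linear_combination hsum

lemma M_diag_value (e₀ : Fin d → ℂ) (he₀ : star e₀ ⬝ᵥ e₀ = 1) (x : Fin d) :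
    M μ e₀ x x x x = 2 / ((d:ℂ) * ((d:ℂ)+1)) := by
  by_cases h : ∃ y : Fin d, y ≠ x
  · obtain ⟨y, hy⟩ := h
    rw [M_diag_two μ e₀ x y (Ne.symm hy), M_offdiag_value μ e₀ he₀ x y (Ne.symm hy)]
    ring
  · push_neg at h
    have hd1 : d = 1 := by
      have h1 := Fintype.card_eq_one_iff.mpr ⟨x, h⟩
      rwa [Fintype.card_fin] at h1
    have hsum := M_sum μ e₀ he₀
    have huniv : (Finset.univ : Finset (Fin d)) = {x} :=
      Finset.eq_singleton_iff_unique_mem.mpr ⟨Finset.mem_univ x, fun y _ => h y⟩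
    rw [huniv, Finset.sum_singleton, Finset.sum_singleton] at hsum
    rw [hsum, hd1]
    norm_num

theorem M_formula (e₀ : Fin d → ℂ) (he₀ : star e₀ ⬝ᵥ e₀ = 1) (i j k l : Fin d) :
    M μ e₀ i j k l =
      (((if i = j then 1 else 0) * (if k = l then 1 else 0)
        + (if i = k then 1 else 0) * (if l = j then 1 else 0)) : ℂ)
        / ((d:ℂ) * ((d:ℂ)+1)) := by
  by_cases hpat : (i = j ∧ k = l) ∨ (i = k ∧ l = j)
  · rcases hpat with ⟨hij, hkl⟩ | ⟨hik, hlj⟩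
    · rw [← hij, ← hkl]
      by_cases hik : i = k
      · rw [← hik]
        rw [M_diag_value μ e₀ he₀ i]
        simp
        norm_num
      · rw [M_offdiag_value μ e₀ he₀ i k hik]
        simp [hij ▸ hik, hik, fun h : k = i => hik h.symm]
    · rw [← hik, ← hlj]
      by_cases hil : i = l
      · rw [← hil]
        rw [M_diag_value μ e₀ he₀ i]
        simp
        norm_num
      · rw [M_cross μ e₀ i l, M_offdiag_value μ e₀ he₀ i l hil]
        simp [hil, fun h : l = i => hil h.symm]
  · rw [M_zero μ e₀ i j k l hpat]
    obtain ⟨h1, h2⟩ := not_or.mp hpat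
    by_cases hij : i = j <;> by_cases hkl : k = l <;> by_cases hik : i = k <;>
      by_cases hlj : l = j <;> simp_all

end HaarMoment
end

open HaarMoment in
/-- second moment of Haar-random pure states:
`∫ |⟨We₀, A We₀⟩|² dμ(W) = (|Tr A|² + Tr(A A†)) / (d(d+1))`. -/
theorem haar_second_moment_fidelity (d : ℕ) (hd : 1 ≤ d)
    (μ : Measure (Matrix.unitaryGroup (Fin d) ℂ))
    [IsProbabilityMeasure μ] [μ.IsMulLeftInvariant]
    (e₀ : Fin d → ℂ) (he₀ : star e₀ ⬝ᵥ e₀ = 1)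
    (A : Matrix (Fin d) (Fin d) ℂ) :
    ∫ W : Matrix.unitaryGroup (Fin d) ℂ,
        ‖star ((W : Matrix (Fin d) (Fin d) ℂ) *ᵥ e₀) ⬝ᵥ
          (A *ᵥ ((W : Matrix (Fin d) (Fin d) ℂ) *ᵥ e₀))‖ ^ 2 ∂μ
      = (‖A.trace‖ ^ 2 + (A * Aᴴ).trace.re) / (d * (d + 1)) := by
  classical
  set S : Matrix.unitaryGroup (Fin d) ℂ → ℂ :=
    fun W => star (ψ e₀ W) ⬝ᵥ (A *ᵥ ψ e₀ W) with hSdef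
  have hψ : Continuous fun W : Matrix.unitaryGroup (Fin d) ℂ => ψ e₀ W :=
    continuous_pi fun i => continuous_psi e₀ i
  have hAv : Continuous fun W : Matrix.unitaryGroup (Fin d) ℂ => A *ᵥ ψ e₀ W :=
    continuous_const.matrix_mulVec hψ
  have hS_cont : Continuous S := by
    apply continuous_finset_sum
    intro i _
    exact (continuous_star.comp (continuous_psi e₀ i)).mul ((continuous_apply i).comp hAv)
  have hInt : Integrable (fun W => S W * conj (S W)) μ :=
    (hS_cont.mul (continuous_star.comp hS_cont)).integrable_of_hasCompactSupport
      (HasCompactSupport.of_compactSpace _)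
  have hpt : ∀ W, ‖S W‖ ^ 2 = (S W * conj (S W)).re := by
    intro W
    rw [Complex.sq_norm, Complex.mul_conj, Complex.ofReal_re]
  have step1 : ∫ W, ‖S W‖ ^ 2 ∂μ = (∫ W, S W * conj (S W) ∂μ).re := by
    rw [integral_congr_ae (Filter.Eventually.of_forall hpt)]
    exact integral_re hInt
  -- expansion of the square as a quadruple sum
  have hSsum : ∀ W, S W * conj (S W)
      = ∑ p ∈ (Finset.univ ×ˢ Finset.univ : Finset (Fin d × Fin d)),
          ∑ q ∈ (Finset.univ ×ˢ Finset.univ : Finset (Fin d × Fin d)),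
            (A p.1 p.2 * conj (A q.1 q.2)) * F e₀ p.1 p.2 q.1 q.2 W := by
    intro W
    have h1 : S W = ∑ p ∈ (Finset.univ ×ˢ Finset.univ : Finset (Fin d × Fin d)),
        A p.1 p.2 * (conj (ψ e₀ W p.1) * ψ e₀ W p.2) := by
      rw [hSdef]
      simp only [dotProduct, Matrix.mulVec, Finset.sum_product, Finset.mul_sum,
        Pi.star_apply]
      refine Finset.sum_congr rfl fun i _ => Finset.sum_congr rfl fun j _ => ?_
      simp only [Complex.star_def]
      ring
    have h2 : conj (S W) = ∑ q ∈ (Finset.univ ×ˢ Finset.univ : Finset (Fin d × Fin d)),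
        conj (A q.1 q.2) * (ψ e₀ W q.1 * conj (ψ e₀ W q.2)) := by
      rw [h1, map_sum]
      refine Finset.sum_congr rfl fun q _ => ?_
      simp only [_root_.map_mul, Complex.conj_conj]
    rw [h2, h1, Finset.sum_mul_sum]
    refine Finset.sum_congr rfl fun p _ => Finset.sum_congr rfl fun q _ => ?_
    unfold F
    ring
  have step2 : ∫ W, S W * conj (S W) ∂μ
      = ∑ p ∈ (Finset.univ ×ˢ Finset.univ : Finset (Fin d × Fin d)),
          ∑ q ∈ (Finset.univ ×ˢ Finset.univ : Finset (Fin d × Fin d)),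
            (A p.1 p.2 * conj (A q.1 q.2)) * M μ e₀ p.1 p.2 q.1 q.2 := by
    rw [integral_congr_ae (Filter.Eventually.of_forall hSsum)]
    rw [integral_finset_sum _ (fun p _ => integrable_finset_sum _
      (fun q _ => (integrable_F μ e₀ p.1 p.2 q.1 q.2).const_mul _))]
    refine Finset.sum_congr rfl fun p _ => ?_
    rw [integral_finset_sum _ (fun q _ => (integrable_F μ e₀ p.1 p.2 q.1 q.2).const_mul _)]
    exact Finset.sum_congr rfl fun q _ => MeasureTheory.integral_const_mul _ _
  -- plug in the moment formula
  have step3 : ∑ p ∈ (Finset.univ ×ˢ Finset.univ : Finset (Fin d × Fin d)),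
          ∑ q ∈ (Finset.univ ×ˢ Finset.univ : Finset (Fin d × Fin d)),
            (A p.1 p.2 * conj (A q.1 q.2)) * M μ e₀ p.1 p.2 q.1 q.2
      = (A.trace * conj A.trace + ∑ i, ∑ j, A i j * conj (A i j))
          / ((d:ℂ) * ((d:ℂ)+1)) := by
    have hnum : ∑ p ∈ (Finset.univ ×ˢ Finset.univ : Finset (Fin d × Fin d)),
          ∑ q ∈ (Finset.univ ×ˢ Finset.univ : Finset (Fin d × Fin d)),
            ((A p.1 p.2 * conj (A q.1 q.2)) *
              ((if p.1 = p.2 then (1:ℂ) else 0) * (if q.1 = q.2 then 1 else 0)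
                + (if p.1 = q.1 then 1 else 0) * (if q.2 = p.2 then 1 else 0)))
        = A.trace * conj A.trace + ∑ i, ∑ j, A i j * conj (A i j) := by
      simp only [Finset.sum_product]
      have htr : A.trace = ∑ i, A i i := by
        simp [Matrix.trace, Matrix.diag]
      have htr' : conj A.trace = ∑ k, conj (A k k) := by
        rw [htr, map_sum]
      rw [htr', htr, Finset.sum_mul_sum]
      simp only [mul_add, mul_ite, mul_one, mul_zero, ite_mul, zero_mul,
        Finset.sum_add_distrib, Finset.sum_ite_eq, Finset.sum_ite_eq', Finset.mem_univ,
        if_true, Finset.sum_ite_irrel, Finset.sum_const_zero]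
    simp_rw [M_formula μ e₀ he₀, ← mul_div_assoc, ← Finset.sum_div]
    rw [hnum]
  -- pass to real parts
  rw [show (fun W : Matrix.unitaryGroup (Fin d) ℂ =>
      ‖star ((W : Matrix (Fin d) (Fin d) ℂ) *ᵥ e₀) ⬝ᵥ
        (A *ᵥ ((W : Matrix (Fin d) (Fin d) ℂ) *ᵥ e₀))‖ ^ 2) = fun W => ‖S W‖ ^ 2
      from rfl]
  rw [step1, step2, step3]
  have h1 : A.trace * conj A.trace = ((Complex.normSq A.trace : ℝ) : ℂ) := Complex.mul_conj _
  have h2 : ∑ i, ∑ j, A i j * conj (A i j)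
      = (((∑ i, ∑ j, Complex.normSq (A i j) : ℝ)) : ℂ) := by
    simp only [Complex.mul_conj]
    norm_cast
  have hD : ((d:ℂ) * ((d:ℂ)+1)) = (((d:ℝ) * ((d:ℝ)+1) : ℝ) : ℂ) := by push_cast; ring
  have h3 : (A * Aᴴ).trace.re = ∑ i, ∑ j, Complex.normSq (A i j) := by
    simp [Matrix.trace, Matrix.diag, Matrix.mul_apply, Matrix.conjTranspose_apply,
      Complex.re_sum, Complex.mul_conj]
  rw [h1, h2, hD, ← Complex.ofReal_add, ← Complex.ofReal_div, Complex.ofReal_re]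
  rw [h3, Complex.sq_norm]
end

section
/- Let n ≥ 1, let ψ₁, …, ψₙ be unit vectors in ℂ², let Ψ_P = ψ₁ ⊗ ⋯ ⊗ ψₙ ∈ (ℂ²)^{⊗n}, and let Φ ∈ (ℂ²)^{⊗n} be any unit vector. Then 1 − (1/n) Σᵢ ⟨Φ, (ψᵢψᵢ† ⊗ 𝟙_ī) Φ⟩ ≤ 1 − |⟨Ψ_P, Φ⟩|² ≤ n · (1 − (1/n) Σᵢ ⟨Φ, (ψᵢψᵢ† ⊗ 𝟙_ī) Φ⟩). -/
open Matrix Finset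

/-- The operator `ψᵢψᵢ† ⊗ 𝟙_ī` on `(ℂ²)^{⊗n}`, identified with the matrix on
`(Fin n → Fin 2) → ℂ` acting as the rank-one projection onto `ψ i` on the `i`-th
tensor factor and as the identity on all other factors. -/
noncomputable def localProj {n : ℕ} (ψ : Fin n → Fin 2 → ℂ) (i : Fin n) :
    Matrix (Fin n → Fin 2) (Fin n → Fin 2) ℂ :=
  fun x y => ψ i (x i) * (starRingEnd ℂ) (ψ i (y i)) *
    (if Function.update x i (y i) = y then 1 else 0)

noncomputable def gl_ortho (v : Fin 2 → ℂ) : Fin 2 → ℂ :=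
  ![-(starRingEnd ℂ) (v 1), (starRingEnd ℂ) (v 0)]

/-- orthonormal basis whose first vector is `v`. -/
noncomputable def gl_bas (v : Fin 2 → ℂ) : Fin 2 → Fin 2 → ℂ := ![v, gl_ortho v]

lemma gl_bas_zero (v : Fin 2 → ℂ) : gl_bas v 0 = v := rfl

lemma gl_bas_complete (v : Fin 2 → ℂ) (hv : star v ⬝ᵥ v = 1) (x y : Fin 2) :
    ∑ a, gl_bas v a x * (starRingEnd ℂ) (gl_bas v a y) = if x = y then 1 else 0 := by
  have hv' : (starRingEnd ℂ) (v 0) * v 0 + (starRingEnd ℂ) (v 1) * v 1 = 1 := by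
    simpa [dotProduct, Fin.sum_univ_two] using hv
  fin_cases x <;> fin_cases y <;>
    simp [gl_bas, gl_ortho, Fin.sum_univ_two] <;> ring_nf <;>
    linear_combination hv'

/-- coefficients of Φ in the product basis. -/
noncomputable def gl_c {n : ℕ} (ψ : Fin n → Fin 2 → ℂ) (Φ : (Fin n → Fin 2) → ℂ) :
    (Fin n → Fin 2) → ℂ :=
  fun s => ∑ x, (∏ i, (starRingEnd ℂ) (gl_bas (ψ i) (s i) (x i))) * Φ x

lemma gl_key {n : ℕ} (ψ : Fin n → Fin 2 → ℂ) (Φ : (Fin n → Fin 2) → ℂ)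
    (t : Fin n → Finset (Fin 2)) :
    ∑ s ∈ Fintype.piFinset t, (starRingEnd ℂ) (gl_c ψ Φ s) * gl_c ψ Φ s
      = ∑ x, ∑ y, (starRingEnd ℂ) (Φ x) * Φ y *
          ∏ i, (∑ a ∈ t i, gl_bas (ψ i) a (x i) * (starRingEnd ℂ) (gl_bas (ψ i) a (y i))) := by
  have expand : ∀ s, (starRingEnd ℂ) (gl_c ψ Φ s) * gl_c ψ Φ s
      = ∑ x, ∑ y, (starRingEnd ℂ) (Φ x) * Φ y *
          ∏ i, (gl_bas (ψ i) (s i) (x i) * (starRingEnd ℂ) (gl_bas (ψ i) (s i) (y i))) := by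
    intro s
    rw [gl_c, map_sum, Finset.sum_mul_sum]
    refine Finset.sum_congr rfl fun x _ => Finset.sum_congr rfl fun y _ => ?_
    rw [_root_.map_mul, map_prod, Finset.prod_mul_distrib]
    simp only [Complex.conj_conj]
    ring
  calc ∑ s ∈ Fintype.piFinset t, (starRingEnd ℂ) (gl_c ψ Φ s) * gl_c ψ Φ s
      = ∑ s ∈ Fintype.piFinset t, ∑ x, ∑ y, (starRingEnd ℂ) (Φ x) * Φ y *
          ∏ i, (gl_bas (ψ i) (s i) (x i) * (starRingEnd ℂ) (gl_bas (ψ i) (s i) (y i))) :=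
        Finset.sum_congr rfl fun s _ => expand s
    _ = ∑ x, ∑ y, ∑ s ∈ Fintype.piFinset t, (starRingEnd ℂ) (Φ x) * Φ y *
          ∏ i, (gl_bas (ψ i) (s i) (x i) * (starRingEnd ℂ) (gl_bas (ψ i) (s i) (y i))) := by
        rw [Finset.sum_comm]
        exact Finset.sum_congr rfl fun x _ => Finset.sum_comm
    _ = _ := by
        refine Finset.sum_congr rfl fun x _ => Finset.sum_congr rfl fun y _ => ?_
        rw [← Finset.mul_sum]
        congr 1
        exact (Finset.prod_univ_sum t fun i a =>
          gl_bas (ψ i) a (x i) * (starRingEnd ℂ) (gl_bas (ψ i) a (y i))).symm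

lemma gl_sum_all {n : ℕ} (ψ : Fin n → Fin 2 → ℂ) (hψ : ∀ i, star (ψ i) ⬝ᵥ ψ i = 1)
    (Φ : (Fin n → Fin 2) → ℂ) (hΦ : star Φ ⬝ᵥ Φ = 1) :
    ∑ s, (starRingEnd ℂ) (gl_c ψ Φ s) * gl_c ψ Φ s = 1 := by
  have hc : ∀ x y : Fin n → Fin 2,
      (∏ i, ∑ a, gl_bas (ψ i) a (x i) * (starRingEnd ℂ) (gl_bas (ψ i) a (y i)))
        = if x = y then (1 : ℂ) else 0 := by
    intro x y
    calc (∏ i, ∑ a, gl_bas (ψ i) a (x i) * (starRingEnd ℂ) (gl_bas (ψ i) a (y i)))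
        = ∏ i, (if x i = y i then (1 : ℂ) else 0) :=
          Finset.prod_congr rfl fun i _ => gl_bas_complete (ψ i) (hψ i) (x i) (y i)
      _ = _ := by rw [Finset.prod_boole]; simp [funext_iff]
  have := gl_key ψ Φ (fun _ => Finset.univ)
  rw [Fintype.piFinset_univ] at this
  rw [this]
  simp_rw [hc]
  simp only [mul_ite, mul_one, mul_zero, Finset.sum_ite_eq, Finset.mem_univ, if_true]
  simpa [dotProduct] using hΦ

lemma gl_sum_proj {n : ℕ} (ψ : Fin n → Fin 2 → ℂ) (hψ : ∀ i, star (ψ i) ⬝ᵥ ψ i = 1)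
    (Φ : (Fin n → Fin 2) → ℂ) (i : Fin n) :
    ∑ s ∈ Finset.univ.filter (fun s => s i = 0), (starRingEnd ℂ) (gl_c ψ Φ s) * gl_c ψ Φ s
      = star Φ ⬝ᵥ (localProj ψ i *ᵥ Φ) := by
  set t : Fin n → Finset (Fin 2) := fun j => if j = i then {0} else Finset.univ with ht
  have hpi : Fintype.piFinset t = Finset.univ.filter (fun s => s i = 0) := by
    ext s
    simp only [Fintype.mem_piFinset, Finset.mem_filter, Finset.mem_univ, true_and, ht]
    constructor
    · intro h; have := h i; simpa using this
    · intro h j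
      by_cases hj : j = i
      · subst hj; simp [h]
      · simp [hj]
  have hprod : ∀ x y : Fin n → Fin 2,
      (∏ j, ∑ a ∈ t j, gl_bas (ψ j) a (x j) * (starRingEnd ℂ) (gl_bas (ψ j) a (y j)))
        = ψ i (x i) * (starRingEnd ℂ) (ψ i (y i)) *
            (if Function.update x i (y i) = y then (1 : ℂ) else 0) := by
    intro x y
    rw [← Finset.mul_prod_erase Finset.univ _ (Finset.mem_univ i)]
    congr 1
    · simp [ht, gl_bas]
    · calc (∏ j ∈ Finset.univ.erase i,
            ∑ a ∈ t j, gl_bas (ψ j) a (x j) * (starRingEnd ℂ) (gl_bas (ψ j) a (y j)))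
          = ∏ j ∈ Finset.univ.erase i, (if x j = y j then (1 : ℂ) else 0) := by
            refine Finset.prod_congr rfl fun j hj => ?_
            have hji : j ≠ i := (Finset.mem_erase.mp hj).1
            simp only [ht, if_neg hji]
            exact gl_bas_complete (ψ j) (hψ j) (x j) (y j)
        _ = _ := by
            rw [Finset.prod_boole]
            congr 1
            simp only [eq_iff_iff]
            constructor
            · intro h
              funext j
              by_cases hj : j = i
              · subst hj; simp
              · rw [Function.update_of_ne hj]
                exact h j (Finset.mem_erase.mpr ⟨hj, Finset.mem_univ j⟩)
            · intro h j hj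
              have hji : j ≠ i := (Finset.mem_erase.mp hj).1
              have := congrFun h j
              rwa [Function.update_of_ne hji] at this
  rw [← hpi, gl_key]
  simp only [hprod]
  simp only [dotProduct, mulVec, localProj, Finset.mul_sum, Pi.star_apply, RCLike.star_def]
  refine Finset.sum_congr rfl fun x _ => Finset.sum_congr rfl fun y _ => ?_
  ring

lemma gl_final (n : ℕ) (hn : 1 ≤ n) (r : (Fin n → Fin 2) → ℝ) (hr : ∀ s, 0 ≤ r s)
    (hsum : ∑ s, r s = 1) :
    1 - (1 / n) * ∑ i, (∑ s ∈ Finset.univ.filter (fun s => s i = 0), r s)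
        ≤ 1 - r (fun _ => 0) ∧
      1 - r (fun _ => 0)
        ≤ n * (1 - (1 / n) * ∑ i, (∑ s ∈ Finset.univ.filter (fun s => s i = 0), r s)) := by
  have npos : (0 : ℝ) < n := by exact_mod_cast hn
  set z : Fin n → Fin 2 := fun _ => 0 with hz
  have hzi : ∀ i, z ∈ Finset.univ.filter (fun s => s i = 0) := by
    intro i; simp [hz]
  constructor
  · have h1 : ∀ i, r z ≤ ∑ s ∈ Finset.univ.filter (fun s => s i = 0), r s := fun i =>
      Finset.single_le_sum (fun s _ => hr s) (hzi i)
    have h2 : (n : ℝ) * r z ≤ ∑ i, (∑ s ∈ Finset.univ.filter (fun s => s i = 0), r s) := by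
      calc (n : ℝ) * r z = ∑ _i : Fin n, r z := by
            rw [Finset.sum_const, Finset.card_univ, Fintype.card_fin, nsmul_eq_mul]
        _ ≤ _ := Finset.sum_le_sum fun i _ => h1 i
    have : r z ≤ (1 / n) * ∑ i, (∑ s ∈ Finset.univ.filter (fun s => s i = 0), r s) := by
      rw [one_div, inv_mul_eq_div, le_div_iff₀ npos, mul_comm]
      exact h2
    linarith
  · have key : 1 - r z ≤ (n : ℝ) - ∑ i, (∑ s ∈ Finset.univ.filter (fun s => s i = 0), r s) := by
      have hsplit : ∀ i : Fin n,
          (∑ s ∈ Finset.univ.filter (fun s => s i = 0), r s)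
            + (∑ s ∈ Finset.univ.filter (fun s => ¬ s i = 0), r s) = 1 := by
        intro i
        rw [Finset.sum_filter_add_sum_filter_not]; exact hsum
      have hsum2 : (n : ℝ) - ∑ i, (∑ s ∈ Finset.univ.filter (fun s => s i = 0), r s)
          = ∑ i, (∑ s ∈ Finset.univ.filter (fun s => ¬ s i = 0), r s) := by
        have : ∑ i : Fin n, ((∑ s ∈ Finset.univ.filter (fun s => s i = 0), r s)
            + (∑ s ∈ Finset.univ.filter (fun s => ¬ s i = 0), r s)) = (n : ℝ) := by
          simp [hsplit]
        rw [Finset.sum_add_distrib] at this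
        linarith
      have h10 : 1 - r z = ∑ s ∈ Finset.univ.erase z, r s := by
        have := Finset.add_sum_erase Finset.univ r (Finset.mem_univ z)
        rw [hsum] at this
        linarith
      rw [hsum2, h10]
      have hcard : ∀ s : Fin n → Fin 2, s ∈ Finset.univ.erase z →
          r s ≤ ((Finset.univ.filter (fun i => ¬ s i = 0)).card : ℝ) * r s := by
        intro s hs
        have hne : s ≠ z := (Finset.mem_erase.mp hs).1
        have : ∃ i, ¬ s i = 0 := by
          by_contra h
          push_neg at h
          exact hne (funext fun i => h i)
        obtain ⟨i, hi⟩ := this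
        have hpos : 1 ≤ ((Finset.univ.filter (fun i => ¬ s i = 0)).card : ℝ) := by
          have : 0 < (Finset.univ.filter (fun i => ¬ s i = 0)).card :=
            Finset.card_pos.mpr ⟨i, by simp [hi]⟩
          exact_mod_cast this
        nlinarith [hr s]
      calc ∑ s ∈ Finset.univ.erase z, r s
          ≤ ∑ s ∈ Finset.univ.erase z,
              ((Finset.univ.filter (fun i => ¬ s i = 0)).card : ℝ) * r s :=
            Finset.sum_le_sum hcard
        _ ≤ ∑ s : Fin n → Fin 2,
              ((Finset.univ.filter (fun i => ¬ s i = 0)).card : ℝ) * r s := by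
            refine Finset.sum_le_sum_of_subset_of_nonneg (Finset.subset_univ _) ?_
            intro s _ _
            exact mul_nonneg (by positivity) (hr s)
        _ = ∑ s : Fin n → Fin 2, ∑ i : Fin n, (if ¬ s i = 0 then r s else 0) := by
            refine Finset.sum_congr rfl fun s _ => ?_
            rw [← Finset.sum_filter, Finset.sum_const, nsmul_eq_mul]
        _ = ∑ i : Fin n, ∑ s : Fin n → Fin 2, (if ¬ s i = 0 then r s else 0) :=
            Finset.sum_comm
        _ = ∑ i, (∑ s ∈ Finset.univ.filter (fun s => ¬ s i = 0), r s) := by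
            refine Finset.sum_congr rfl fun i _ => ?_
            rw [Finset.sum_filter]
    have hne : (n : ℝ) ≠ 0 := ne_of_gt npos
    have : (n : ℝ) * (1 - (1 / n) * ∑ i, (∑ s ∈ Finset.univ.filter (fun s => s i = 0), r s))
        = (n : ℝ) - ∑ i, (∑ s ∈ Finset.univ.filter (fun s => s i = 0), r s) := by
      field_simp
    linarith

/-- pointwise global-versus-local loss comparison: for unit vectors
`ψ₁, …, ψₙ ∈ ℂ²` with product `Ψ_P = ψ₁ ⊗ ⋯ ⊗ ψₙ` and any unit vector `Φ`,
`1 − (1/n)Σᵢ⟨Φ,(ψᵢψᵢ†⊗𝟙_ī)Φ⟩ ≤ 1 − |⟨Ψ_P,Φ⟩|² ≤ n·(1 − (1/n)Σᵢ⟨Φ,(ψᵢψᵢ†⊗𝟙_ī)Φ⟩)`. -/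
theorem global_vs_local_loss_pointwise (n : ℕ) (hn : 1 ≤ n)
    (ψ : Fin n → Fin 2 → ℂ) (hψ : ∀ i, star (ψ i) ⬝ᵥ ψ i = 1)
    (ΨP : (Fin n → Fin 2) → ℂ) (hΨP : ΨP = fun x => ∏ i, ψ i (x i))
    (Φ : (Fin n → Fin 2) → ℂ) (hΦ : star Φ ⬝ᵥ Φ = 1) :
    1 - (1 / n) * ∑ i, (star Φ ⬝ᵥ (localProj ψ i *ᵥ Φ)).re
        ≤ 1 - ‖star ΨP ⬝ᵥ Φ‖ ^ 2 ∧
      1 - ‖star ΨP ⬝ᵥ Φ‖ ^ 2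
        ≤ n * (1 - (1 / n) * ∑ i, (star Φ ⬝ᵥ (localProj ψ i *ᵥ Φ)).re) := by

  set r : (Fin n → Fin 2) → ℝ := fun s => Complex.normSq (gl_c ψ Φ s) with hrdef
  have hcc : ∀ s, (starRingEnd ℂ) (gl_c ψ Φ s) * gl_c ψ Φ s = ((r s : ℝ) : ℂ) := by
    intro s; rw [hrdef, mul_comm, Complex.mul_conj]
  have hA : ∑ s, r s = 1 := by
    have h : ∑ s, ((r s : ℝ) : ℂ) = 1 := by
      simp_rw [← hcc]; exact gl_sum_all ψ hψ Φ hΦ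
    rw [← Complex.ofReal_sum] at h
    exact_mod_cast h
  have hB : ∀ i, (star Φ ⬝ᵥ (localProj ψ i *ᵥ Φ)).re
      = ∑ s ∈ Finset.univ.filter (fun s => s i = 0), r s := by
    intro i
    rw [← gl_sum_proj ψ hψ Φ i]
    simp_rw [hcc]
    rw [← Complex.ofReal_sum, Complex.ofReal_re]
  have hC : ‖star ΨP ⬝ᵥ Φ‖ ^ 2 = r (fun _ => 0) := by
    have h0 : star ΨP ⬝ᵥ Φ = gl_c ψ Φ (fun _ => 0) := by
      simp [gl_c, dotProduct, hΨP, map_prod, gl_bas]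
    rw [h0, Complex.sq_norm, hrdef]
  simp_rw [hB, hC]
  exact gl_final n hn r (fun s => Complex.normSq_nonneg _) hA
end

section
/- Let n ≥ 1 and d = 2ⁿ, and let U, V be n-qubit unitaries (d×d complex unitary matrices). Then C^L_prod(U,V) ≤ C^G_prod(U,V) ≤ n · C^L_prod(U,V). -/
set_option linter.unusedSectionVars false


open MeasureTheory Matrix Finset

/-- The Haar-random product state `⊗ᵢ wᵢ|0⟩` on `n` qubits, where the `n`-qubit Hilbert space
`(ℂ²)^{⊗n}` is identified with `(Fin n → Fin 2) → ℂ` (of dimension `2ⁿ`). -/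
noncomputable def prodState {n : ℕ} (q₀ : Fin 2 → ℂ)
    (w : Fin n → Matrix.unitaryGroup (Fin 2) ℂ) : (Fin n → Fin 2) → ℂ :=
  fun x => ∏ i, ((w i : Matrix (Fin 2) (Fin 2) ℂ) *ᵥ q₀) (x i)

section core
variable {ι : Type*} [Fintype ι] [DecidableEq ι]

noncomputable def qform (φ : ι → ℂ) (M : Matrix ι ι ℂ) : ℝ := (star φ ⬝ᵥ (M *ᵥ φ)).re

def IsProjM (M : Matrix ι ι ℂ) : Prop := Mᴴ = M ∧ M * M = M

variable (φ : ι → ℂ) {A B M N : Matrix ι ι ℂ}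

lemma qform_add : qform φ (M + N) = qform φ M + qform φ N := by
  simp [qform, Matrix.add_mulVec, dotProduct_add]

lemma qform_sub : qform φ (M - N) = qform φ M - qform φ N := by
  simp [qform, Matrix.sub_mulVec, dotProduct_sub]

lemma qform_one (h : star φ ⬝ᵥ φ = 1) : qform φ 1 = 1 := by
  simp [qform, h]

lemma qform_nonneg (hM : IsProjM M) : 0 ≤ qform φ M := by
  have h1 : M = Mᴴ * M := by rw [hM.1, hM.2]
  have h2 : star φ ⬝ᵥ (M *ᵥ φ) = star (M *ᵥ φ) ⬝ᵥ (M *ᵥ φ) := by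
    conv_lhs => rw [h1, ← Matrix.mulVec_mulVec]
    rw [Matrix.dotProduct_mulVec, ← star_mulVec]
  rw [qform, h2]
  have h3 : (star (M *ᵥ φ) ⬝ᵥ (M *ᵥ φ)).re = ∑ x, Complex.normSq ((M *ᵥ φ) x) := by
    simp [dotProduct, Complex.re_sum, Complex.normSq_apply]
  rw [h3]
  exact Finset.sum_nonneg fun x _ => Complex.normSq_nonneg _

lemma IsProjM.one : IsProjM (1 : Matrix ι ι ℂ) := ⟨Matrix.conjTranspose_one, one_mul 1⟩

lemma IsProjM.one_sub (hA : IsProjM A) : IsProjM (1 - A) := by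
  constructor
  · simp [Matrix.conjTranspose_sub, hA.1]
  · have := hA.2; noncomm_ring [this]

lemma IsProjM.mul (hA : IsProjM A) (hB : IsProjM B) (hc : A * B = B * A) :
    IsProjM (A * B) := by
  constructor
  · rw [Matrix.conjTranspose_mul, hA.1, hB.1, hc]
  · calc A * B * (A * B) = A * (B * A) * B := by noncomm_ring
    _ = A * (A * B) * B := by rw [hc]
    _ = (A * A) * (B * B) := by noncomm_ring
    _ = A * B := by rw [hA.2, hB.2]

lemma qform_le_one (hφ : star φ ⬝ᵥ φ = 1) (hA : IsProjM A) : qform φ A ≤ 1 := by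
  have h := qform_nonneg φ hA.one_sub
  rw [qform_sub, qform_one φ hφ] at h
  linarith

lemma qform_mul_ge (hφ : star φ ⬝ᵥ φ = 1) (hA : IsProjM A) (hB : IsProjM B)
    (hc : A * B = B * A) : qform φ A + qform φ B - 1 ≤ qform φ (A * B) := by
  have hc' : (1 - A) * (1 - B) = (1 - B) * (1 - A) := by noncomm_ring [hc]
  have h := qform_nonneg φ ((hA.one_sub).mul (hB.one_sub) hc')
  have he : (1 - A) * (1 - B) = (1 - A - B) + A * B := by noncomm_ring
  rw [he, qform_add, qform_sub, qform_sub, qform_one φ hφ] at h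
  linarith

lemma qform_mul_le (hA : IsProjM A) (hB : IsProjM B)
    (hc : A * B = B * A) : qform φ (A * B) ≤ qform φ A := by
  have hc' : A * (1 - B) = (1 - B) * A := by noncomm_ring [hc]
  have h := qform_nonneg φ (hA.mul (hB.one_sub) hc')
  have he : A * (1 - B) = A - A * B := by noncomm_ring
  rw [he, qform_sub] at h
  linarith

end core


section structurepart
variable {n : ℕ}

noncomputable def projS (ψ : Fin n → Fin 2 → ℂ) (s : Finset (Fin n)) :
    Matrix (Fin n → Fin 2) (Fin n → Fin 2) ℂ :=
  fun x y => (∏ i ∈ s, ψ i (x i) * (starRingEnd ℂ) (ψ i (y i))) *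
    (if ∀ j, j ∉ s → x j = y j then 1 else 0)

lemma update_eq_iff' (x y : Fin n → Fin 2) (i : Fin n) :
    Function.update x i (y i) = y ↔ ∀ j, j ≠ i → x j = y j := by
  constructor
  · intro h j hj
    have := congrFun h j
    rwa [Function.update_of_ne hj] at this
  · intro h
    funext j
    by_cases hj : j = i
    · subst hj; simp
    · rw [Function.update_of_ne hj]; exact h j hj

lemma projS_empty (ψ : Fin n → Fin 2 → ℂ) : projS ψ ∅ = 1 := by
  funext x y
  simp only [projS, Finset.prod_empty, one_mul, Matrix.one_apply]
  congr 1
  simp [funext_iff]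

lemma localProj_eq_projS (ψ : Fin n → Fin 2 → ℂ) (i : Fin n) :
    localProj ψ i = projS ψ {i} := by
  funext x y
  simp only [localProj, projS, Finset.prod_singleton]
  congr 2
  rw [update_eq_iff' x y i]
  simp

lemma projS_herm (ψ : Fin n → Fin 2 → ℂ) (s : Finset (Fin n)) :
    (projS ψ s)ᴴ = projS ψ s := by
  funext x y
  simp only [Matrix.conjTranspose_apply, projS]
  rw [star_mul', star_prod]
  congr 1
  · apply Finset.prod_congr rfl
    intro i _
    rw [star_mul']
    simp [mul_comm]
  · by_cases h : ∀ j, j ∉ s → x j = y j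
    · have h' : ∀ j, j ∉ s → y j = x j := fun j hj => (h j hj).symm
      rw [if_pos h, if_pos h']; exact star_one _
    · have h' : ¬ ∀ j, j ∉ s → y j = x j := by
        intro hc; exact h fun j hj => (hc j hj).symm
      rw [if_neg h, if_neg h']; exact star_zero _

lemma sum_update (x : Fin n → Fin 2) (i : Fin n) (G : (Fin n → Fin 2) → ℂ) :
    ∑ z : Fin n → Fin 2, (if Function.update x i (z i) = z then (1:ℂ) else 0) * G z
      = ∑ b : Fin 2, G (Function.update x i b) := by
  have h1 : ∀ z : Fin n → Fin 2,
      (if Function.update x i (z i) = z then (1:ℂ) else 0) * G z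
        = if Function.update x i (z i) = z then G z else 0 := by
    intro z; split <;> simp
  rw [Finset.sum_congr rfl fun z _ => h1 z, ← Finset.sum_filter]
  have h2 : Finset.univ.filter (fun z => Function.update x i (z i) = z)
      = Finset.univ.image (fun b => Function.update x i b) := by
    ext z
    simp only [Finset.mem_filter, Finset.mem_univ, true_and, Finset.mem_image]
    constructor
    · intro h; exact ⟨z i, h⟩
    · rintro ⟨b, rfl⟩
      simp
  rw [h2, Finset.sum_image]
  intro a _ b _ hab
  have := congrFun hab i
  simpa using this

end structurepart

section part2
variable {n : ℕ} (ψ : Fin n → Fin 2 → ℂ)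

lemma projS_insert {i : Fin n} {s : Finset (Fin n)} (hi : i ∉ s) :
    projS ψ (insert i s) = localProj ψ i * projS ψ s := by
  funext x y
  rw [Matrix.mul_apply]
  have h1 : ∀ z, localProj ψ i x z * projS ψ s z y
      = (if Function.update x i (z i) = z then (1:ℂ) else 0) *
        (ψ i (x i) * (starRingEnd ℂ) (ψ i (z i)) * projS ψ s z y) := by
    intro z; rw [localProj]; ring
  rw [Finset.sum_congr rfl fun z _ => h1 z, sum_update]
  have h2 : ∀ b : Fin 2, Function.update x i b i = b := fun b => Function.update_self i b x
  by_cases hC : ∀ j, j ∉ insert i s → x j = y j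
  · have hsum : ∀ b : Fin 2,
        ψ i (x i) * (starRingEnd ℂ) (ψ i (Function.update x i b i)) *
          projS ψ s (Function.update x i b) y
        = if b = y i then
            ψ i (x i) * (starRingEnd ℂ) (ψ i (y i)) *
              ((∏ j ∈ s, ψ j (x j) * (starRingEnd ℂ) (ψ j (y j)))) else 0 := by
      intro b
      rw [h2, projS]
      have hprod : (∏ j ∈ s, ψ j (Function.update x i b j) * (starRingEnd ℂ) (ψ j (y j)))
          = ∏ j ∈ s, ψ j (x j) * (starRingEnd ℂ) (ψ j (y j)) := by
        apply Finset.prod_congr rfl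
        intro j hj
        have : j ≠ i := fun h => hi (h ▸ hj)
        rw [Function.update_of_ne this]
      rw [hprod]
      by_cases hb : b = y i
      · subst hb
        rw [if_pos, if_pos rfl]
        · ring
        · intro j hj
          by_cases hji : j = i
          · subst hji; exact h2 _
          · rw [Function.update_of_ne hji]
            exact hC j (by simp [hji, hj])
      · rw [if_neg, if_neg hb]
        · ring
        · intro hc
          exact hb (by simpa [h2] using hc i (by simp [hi]))
    rw [Finset.sum_congr rfl fun b _ => hsum b, Finset.sum_ite_eq' Finset.univ (y i)
      (fun _ => ψ i (x i) * (starRingEnd ℂ) (ψ i (y i)) *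
        (∏ j ∈ s, ψ j (x j) * (starRingEnd ℂ) (ψ j (y j))))]
    rw [if_pos (Finset.mem_univ _), projS, Finset.prod_insert hi, if_pos hC]
    ring
  · have hz : ∀ b : Fin 2,
        ψ i (x i) * (starRingEnd ℂ) (ψ i (Function.update x i b i)) *
          projS ψ s (Function.update x i b) y = 0 := by
      intro b
      rw [projS, if_neg, mul_zero, mul_zero]
      intro hc
      exact hC fun j hj => by
        have hji : j ≠ i := fun h => hj (by simp [h])
        have := hc j (fun h => hj (Finset.mem_insert_of_mem h))
        rwa [Function.update_of_ne hji] at this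
    rw [Finset.sum_congr rfl fun b _ => hz b, Finset.sum_const_zero, projS, if_neg hC, mul_zero]

lemma localProj_idem (i : Fin n) (hψ : star (ψ i) ⬝ᵥ ψ i = 1) :
    localProj ψ i * localProj ψ i = localProj ψ i := by
  funext x y
  rw [Matrix.mul_apply]
  have h1 : ∀ z, localProj ψ i x z * localProj ψ i z y
      = (if Function.update x i (z i) = z then (1:ℂ) else 0) *
        (ψ i (x i) * (starRingEnd ℂ) (ψ i (z i)) * localProj ψ i z y) := by
    intro z; rw [localProj]; ring
  rw [Finset.sum_congr rfl fun z _ => h1 z, sum_update]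
  have h2 : ∀ b : Fin 2, Function.update x i b i = b := fun b => Function.update_self i b x
  have h3 : ∀ b : Fin 2,
      ψ i (x i) * (starRingEnd ℂ) (ψ i (Function.update x i b i)) *
        localProj ψ i (Function.update x i b) y
      = ((starRingEnd ℂ) (ψ i b) * ψ i b) * localProj ψ i x y := by
    intro b
    rw [h2, localProj, localProj, h2, Function.update_idem]
    ring
  rw [Finset.sum_congr rfl fun b _ => h3 b, ← Finset.sum_mul]
  have h4 : (∑ b : Fin 2, (starRingEnd ℂ) (ψ i b) * ψ i b) = 1 := by
    rw [← hψ]; rfl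
  rw [h4, one_mul]

end part2

section part3
variable {n : ℕ} {ψ : Fin n → Fin 2 → ℂ}

lemma localProj_herm (i : Fin n) : (localProj ψ i)ᴴ = localProj ψ i := by
  rw [localProj_eq_projS, projS_herm]

lemma commute_localProj_projS {i : Fin n} {s : Finset (Fin n)} (hi : i ∉ s) :
    localProj ψ i * projS ψ s = projS ψ s * localProj ψ i := by
  have h : (localProj ψ i * projS ψ s)ᴴ = localProj ψ i * projS ψ s := by
    rw [← projS_insert ψ hi, projS_herm]
  conv_lhs => rw [← h]
  rw [Matrix.conjTranspose_mul, projS_herm, localProj_herm]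

variable (hψ : ∀ i, star (ψ i) ⬝ᵥ ψ i = 1)
include hψ

lemma isProjM_localProj (i : Fin n) : IsProjM (localProj ψ i) :=
  ⟨localProj_herm i, localProj_idem ψ i (hψ i)⟩

lemma isProjM_projS (s : Finset (Fin n)) : IsProjM (projS ψ s) := by
  induction s using Finset.induction_on with
  | empty => rw [projS_empty]; exact IsProjM.one
  | @insert i s hi ih =>
    rw [projS_insert ψ hi]
    exact (isProjM_localProj hψ i).mul ih (commute_localProj_projS hi)

variable {φ : (Fin n → Fin 2) → ℂ} (hφ : star φ ⬝ᵥ φ = 1)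
include hφ

lemma qform_univ_le (i : Fin n) :
    qform φ (projS ψ Finset.univ) ≤ qform φ (localProj ψ i) := by
  have hu : (Finset.univ : Finset (Fin n)) = insert i (Finset.univ.erase i) :=
    (Finset.insert_erase (Finset.mem_univ i)).symm
  rw [hu, projS_insert ψ (Finset.notMem_erase i _)]
  exact qform_mul_le φ (isProjM_localProj hψ i) (isProjM_projS hψ _)
    (commute_localProj_projS (Finset.notMem_erase i _))

lemma qform_sum_le (s : Finset (Fin n)) :
    ∑ i ∈ s, qform φ (localProj ψ i) ≤ ((s.card : ℝ) - 1) + qform φ (projS ψ s) := by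
  induction s using Finset.induction_on with
  | empty =>
    rw [projS_empty, qform_one φ hφ]
    simp
  | @insert i s hi ih =>
    rw [Finset.sum_insert hi, projS_insert ψ hi, Finset.card_insert_of_notMem hi]
    have hkey := qform_mul_ge φ hφ (isProjM_localProj hψ i) (isProjM_projS hψ s)
      (commute_localProj_projS hi)
    push_cast
    linarith

end part3

section part4
variable {n : ℕ} {ψ : Fin n → Fin 2 → ℂ} {φ : (Fin n → Fin 2) → ℂ}

lemma projS_univ_apply (ψ : Fin n → Fin 2 → ℂ) (x y : Fin n → Fin 2) :
    projS ψ Finset.univ x y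
      = (∏ i, ψ i (x i)) * (starRingEnd ℂ) (∏ i, ψ i (y i)) := by
  rw [projS, if_pos (fun j hj => absurd (Finset.mem_univ j) hj), mul_one, map_prod,
    Finset.prod_mul_distrib]

lemma qform_projS_univ (φ : (Fin n → Fin 2) → ℂ) (ψ : Fin n → Fin 2 → ℂ) :
    qform φ (projS ψ Finset.univ)
      = ‖(star φ ⬝ᵥ (fun x => ∏ i, ψ i (x i)))‖ ^ 2 := by
  set Ψ : (Fin n → Fin 2) → ℂ := fun x => ∏ i, ψ i (x i) with hΨ
  have h1 : projS ψ Finset.univ *ᵥ φ = fun x => Ψ x * (star Ψ ⬝ᵥ φ) := by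
    funext x
    simp only [Matrix.mulVec, dotProduct, Finset.mul_sum]
    apply Finset.sum_congr rfl
    intro y _
    rw [projS_univ_apply]
    simp only [Pi.star_apply, RCLike.star_def, hΨ]
    ring
  rw [qform, h1]
  have h2 : star φ ⬝ᵥ (fun x => Ψ x * (star Ψ ⬝ᵥ φ))
      = (star φ ⬝ᵥ Ψ) * (star Ψ ⬝ᵥ φ) := by
    simp only [dotProduct, Finset.sum_mul]
    apply Finset.sum_congr rfl
    intro y _
    ring
  rw [h2]
  have h3 : star Ψ ⬝ᵥ φ = (starRingEnd ℂ) (star φ ⬝ᵥ Ψ) := by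
    simp only [dotProduct, map_sum, Pi.star_apply, RCLike.star_def, _root_.map_mul,
      Complex.conj_conj]
    apply Finset.sum_congr rfl
    intro y _
    ring
  rw [h3, Complex.mul_conj, ← Complex.normSq_eq_norm_sq]
  simp

lemma prodState_unit (hψ : ∀ i, star (ψ i) ⬝ᵥ ψ i = 1) :
    star (fun x => ∏ i, ψ i (x i) : (Fin n → Fin 2) → ℂ) ⬝ᵥ (fun x => ∏ i, ψ i (x i)) = 1 := by
  have h1 : ∀ x : Fin n → Fin 2,
      (star (fun x => ∏ i, ψ i (x i) : (Fin n → Fin 2) → ℂ)) x * (∏ i, ψ i (x i))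
        = ∏ i, (starRingEnd ℂ) (ψ i (x i)) * ψ i (x i) := by
    intro x
    simp only [Pi.star_apply, RCLike.star_def, map_prod, Finset.prod_mul_distrib]
  have hps := Fintype.prod_sum (fun (i : Fin n) (b : Fin 2) => (starRingEnd ℂ) (ψ i b) * ψ i b)
  rw [dotProduct, Finset.sum_congr rfl fun x _ => h1 x, ← hps]
  have h2 : ∀ i : Fin n, ∑ b : Fin 2, (starRingEnd ℂ) (ψ i b) * ψ i b = 1 := by
    intro i
    rw [← hψ i]; rfl
  rw [Finset.prod_congr rfl fun i _ => h2 i, Finset.prod_const_one]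

end part4

section part5
variable {n : ℕ}

lemma pointwise_facts (q₀ : Fin 2 → ℂ) (hq₀ : star q₀ ⬝ᵥ q₀ = 1)
    (U V : Matrix.unitaryGroup (Fin n → Fin 2) ℂ)
    (w : Fin n → Matrix.unitaryGroup (Fin 2) ℂ) :
    (0 ≤ ‖(star (prodState q₀ w) ⬝ᵥ
          (((U : Matrix (Fin n → Fin 2) (Fin n → Fin 2) ℂ)ᴴ *
              (V : Matrix (Fin n → Fin 2) (Fin n → Fin 2) ℂ)) *ᵥ prodState q₀ w))‖ ^ 2) ∧
    (∀ i : Fin n,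
      ‖(star (prodState q₀ w) ⬝ᵥ
          (((U : Matrix (Fin n → Fin 2) (Fin n → Fin 2) ℂ)ᴴ *
              (V : Matrix (Fin n → Fin 2) (Fin n → Fin 2) ℂ)) *ᵥ prodState q₀ w))‖ ^ 2
        ≤ (star (prodState q₀ w) ⬝ᵥ
          (((U : Matrix (Fin n → Fin 2) (Fin n → Fin 2) ℂ)ᴴ *
              (V : Matrix (Fin n → Fin 2) (Fin n → Fin 2) ℂ) *
              localProj (fun i => (w i : Matrix (Fin 2) (Fin 2) ℂ) *ᵥ q₀) i *
              (V : Matrix (Fin n → Fin 2) (Fin n → Fin 2) ℂ)ᴴ *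
              (U : Matrix (Fin n → Fin 2) (Fin n → Fin 2) ℂ)) *ᵥ prodState q₀ w)).re ∧
      (star (prodState q₀ w) ⬝ᵥ
          (((U : Matrix (Fin n → Fin 2) (Fin n → Fin 2) ℂ)ᴴ *
              (V : Matrix (Fin n → Fin 2) (Fin n → Fin 2) ℂ) *
              localProj (fun i => (w i : Matrix (Fin 2) (Fin 2) ℂ) *ᵥ q₀) i *
              (V : Matrix (Fin n → Fin 2) (Fin n → Fin 2) ℂ)ᴴ *
              (U : Matrix (Fin n → Fin 2) (Fin n → Fin 2) ℂ)) *ᵥ prodState q₀ w)).re ≤ 1) ∧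
    (∑ i : Fin n, (star (prodState q₀ w) ⬝ᵥ
          (((U : Matrix (Fin n → Fin 2) (Fin n → Fin 2) ℂ)ᴴ *
              (V : Matrix (Fin n → Fin 2) (Fin n → Fin 2) ℂ) *
              localProj (fun i => (w i : Matrix (Fin 2) (Fin 2) ℂ) *ᵥ q₀) i *
              (V : Matrix (Fin n → Fin 2) (Fin n → Fin 2) ℂ)ᴴ *
              (U : Matrix (Fin n → Fin 2) (Fin n → Fin 2) ℂ)) *ᵥ prodState q₀ w)).re
      ≤ ((n : ℝ) - 1) + ‖(star (prodState q₀ w) ⬝ᵥ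
          (((U : Matrix (Fin n → Fin 2) (Fin n → Fin 2) ℂ)ᴴ *
              (V : Matrix (Fin n → Fin 2) (Fin n → Fin 2) ℂ)) *ᵥ prodState q₀ w))‖ ^ 2) := by
  set ψ : Fin n → Fin 2 → ℂ := fun i => (w i : Matrix (Fin 2) (Fin 2) ℂ) *ᵥ q₀ with hψdef
  have hψ : ∀ i, star (ψ i) ⬝ᵥ ψ i = 1 := by
    intro i
    rw [hψdef]
    rw [star_mulVec, Matrix.dotProduct_mulVec, Matrix.vecMul_vecMul]
    rw [← Matrix.star_eq_conjTranspose, (w i).2.1, Matrix.vecMul_one, hq₀]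
  set Ψ : (Fin n → Fin 2) → ℂ := prodState q₀ w with hΨdef
  have hΨfun : Ψ = fun x => ∏ i, ψ i (x i) := rfl
  have hΨ1 : star Ψ ⬝ᵥ Ψ = 1 := by rw [hΨfun]; exact prodState_unit hψ
  set W : Matrix (Fin n → Fin 2) (Fin n → Fin 2) ℂ :=
    (U : Matrix (Fin n → Fin 2) (Fin n → Fin 2) ℂ)ᴴ *
      (V : Matrix (Fin n → Fin 2) (Fin n → Fin 2) ℂ) with hWdef
  have hWH : Wᴴ = (V : Matrix (Fin n → Fin 2) (Fin n → Fin 2) ℂ)ᴴ *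
      (U : Matrix (Fin n → Fin 2) (Fin n → Fin 2) ℂ) := by
    rw [hWdef, Matrix.conjTranspose_mul, Matrix.conjTranspose_conjTranspose]
  have hVV : (V : Matrix (Fin n → Fin 2) (Fin n → Fin 2) ℂ) *
      (V : Matrix (Fin n → Fin 2) (Fin n → Fin 2) ℂ)ᴴ = 1 := by
    rw [← Matrix.star_eq_conjTranspose]; exact V.2.2
  have hUU : (U : Matrix (Fin n → Fin 2) (Fin n → Fin 2) ℂ)ᴴ *
      (U : Matrix (Fin n → Fin 2) (Fin n → Fin 2) ℂ) = 1 := by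
    rw [← Matrix.star_eq_conjTranspose]; exact U.2.1
  have hWW : W * Wᴴ = 1 := by
    rw [hWH, hWdef]
    calc (U : Matrix (Fin n → Fin 2) (Fin n → Fin 2) ℂ)ᴴ *
        (V : Matrix (Fin n → Fin 2) (Fin n → Fin 2) ℂ) *
        ((V : Matrix (Fin n → Fin 2) (Fin n → Fin 2) ℂ)ᴴ *
          (U : Matrix (Fin n → Fin 2) (Fin n → Fin 2) ℂ))
        = (U : Matrix (Fin n → Fin 2) (Fin n → Fin 2) ℂ)ᴴ *
          ((V : Matrix (Fin n → Fin 2) (Fin n → Fin 2) ℂ) *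
            (V : Matrix (Fin n → Fin 2) (Fin n → Fin 2) ℂ)ᴴ) *
          (U : Matrix (Fin n → Fin 2) (Fin n → Fin 2) ℂ) := by noncomm_ring
      _ = 1 := by rw [hVV, Matrix.mul_one, hUU]
  set φ : (Fin n → Fin 2) → ℂ := Wᴴ *ᵥ Ψ with hφdef
  have hstarφ : star φ = star Ψ ᵥ* W := by
    rw [hφdef, star_mulVec, Matrix.conjTranspose_conjTranspose]
  have hφ : star φ ⬝ᵥ φ = 1 := by
    rw [hφdef, hstarφ, Matrix.dotProduct_mulVec, Matrix.vecMul_vecMul, hWW,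
      Matrix.vecMul_one, hΨ1]
  have hG : ‖(star Ψ ⬝ᵥ (W *ᵥ Ψ))‖ ^ 2 = qform φ (projS ψ Finset.univ) := by
    rw [qform_projS_univ, ← hΨfun]
    have h1 : star Ψ ⬝ᵥ (W *ᵥ Ψ) = star φ ⬝ᵥ Ψ := by
      rw [hstarφ, Matrix.dotProduct_mulVec]
    rw [h1]
  have ht : ∀ i : Fin n, star Ψ ⬝ᵥ ((W * localProj ψ i * Wᴴ) *ᵥ Ψ)
      = star φ ⬝ᵥ (localProj ψ i *ᵥ φ) := by
    intro i
    rw [← Matrix.mulVec_mulVec, ← Matrix.mulVec_mulVec, Matrix.dotProduct_mulVec, ← hstarφ,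
      hφdef]
  have hMeq : ∀ i : Fin n,
      (U : Matrix (Fin n → Fin 2) (Fin n → Fin 2) ℂ)ᴴ *
        (V : Matrix (Fin n → Fin 2) (Fin n → Fin 2) ℂ) *
        localProj ψ i *
        (V : Matrix (Fin n → Fin 2) (Fin n → Fin 2) ℂ)ᴴ *
        (U : Matrix (Fin n → Fin 2) (Fin n → Fin 2) ℂ)
      = W * localProj ψ i * Wᴴ := by
    intro i
    rw [hWH, hWdef]
    simp only [Matrix.mul_assoc]
  refine ⟨by positivity, fun i => ⟨?_, ?_⟩, ?_⟩
  · rw [hMeq i, ht i]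
    have h2 := qform_univ_le hψ hφ i
    rw [← hG] at h2
    exact h2
  · rw [hMeq i, ht i]
    exact qform_le_one φ hφ (isProjM_localProj hψ i)
  · have h3 := qform_sum_le hψ hφ Finset.univ
    rw [Finset.card_univ, Fintype.card_fin] at h3
    calc ∑ i : Fin n, (star Ψ ⬝ᵥ
          (((U : Matrix (Fin n → Fin 2) (Fin n → Fin 2) ℂ)ᴴ *
              (V : Matrix (Fin n → Fin 2) (Fin n → Fin 2) ℂ) *
              localProj ψ i *
              (V : Matrix (Fin n → Fin 2) (Fin n → Fin 2) ℂ)ᴴ *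
              (U : Matrix (Fin n → Fin 2) (Fin n → Fin 2) ℂ)) *ᵥ Ψ)).re
        = ∑ i : Fin n, qform φ (localProj ψ i) := by
          apply Finset.sum_congr rfl
          intro i _
          rw [hMeq i, ht i]
          rfl
      _ ≤ ((n : ℝ) - 1) + qform φ (projS ψ Finset.univ) := h3
      _ = ((n : ℝ) - 1) + ‖(star Ψ ⬝ᵥ (W *ᵥ Ψ))‖ ^ 2 := by rw [hG]

end part5

open MeasureTheory

instance : SecondCountableTopology (Matrix (Fin 2) (Fin 2) ℂ) :=
  (inferInstance : SecondCountableTopology (Fin 2 → Fin 2 → ℂ))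

instance : SecondCountableTopology (Matrix.unitaryGroup (Fin 2) ℂ) :=
  TopologicalSpace.secondCountableTopology_induced _ (Matrix (Fin 2) (Fin 2) ℂ) Subtype.val

instance inst_s11 {m : Type*} [Fintype m] [DecidableEq m] :
    BorelSpace (Matrix.unitaryGroup m ℂ) := ⟨rfl⟩

instance (n : ℕ) : OpensMeasurableSpace (Fin n → Matrix.unitaryGroup (Fin 2) ℂ) :=
  inferInstance

/-- product cost, global versus local:
`C^L_prod(U,V) ≤ C^G_prod(U,V) ≤ n·C^L_prod(U,V)`. -/
theorem global_vs_local_product_cost (n : ℕ) (hn : 1 ≤ n)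
    (μ₂ : Measure (Matrix.unitaryGroup (Fin 2) ℂ))
    [IsProbabilityMeasure μ₂] [μ₂.IsMulLeftInvariant]
    (q₀ : Fin 2 → ℂ) (hq₀ : star q₀ ⬝ᵥ q₀ = 1)
    (U V : Matrix.unitaryGroup (Fin n → Fin 2) ℂ)
    (CGprod : ℝ)
    (hCGprod : CGprod = 1 - ∫ w : Fin n → Matrix.unitaryGroup (Fin 2) ℂ,
        ‖(star (prodState q₀ w) ⬝ᵥ
          (((U : Matrix (Fin n → Fin 2) (Fin n → Fin 2) ℂ)ᴴ *
              (V : Matrix (Fin n → Fin 2) (Fin n → Fin 2) ℂ)) *ᵥ prodState q₀ w))‖ ^ 2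
          ∂(Measure.pi fun _ : Fin n => μ₂))
    (CLprod : ℝ)
    (hCLprod : CLprod = 1 - ∫ w : Fin n → Matrix.unitaryGroup (Fin 2) ℂ,
        ((1 / n : ℝ) * ∑ i, (star (prodState q₀ w) ⬝ᵥ
          (((U : Matrix (Fin n → Fin 2) (Fin n → Fin 2) ℂ)ᴴ *
              (V : Matrix (Fin n → Fin 2) (Fin n → Fin 2) ℂ) *
              localProj (fun i => (w i : Matrix (Fin 2) (Fin 2) ℂ) *ᵥ q₀) i *
              (V : Matrix (Fin n → Fin 2) (Fin n → Fin 2) ℂ)ᴴ *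
              (U : Matrix (Fin n → Fin 2) (Fin n → Fin 2) ℂ)) *ᵥ prodState q₀ w)).re)
          ∂(Measure.pi fun _ : Fin n => μ₂)) :
    CLprod ≤ CGprod ∧ CGprod ≤ n * CLprod := by
  have hn' : (0 : ℝ) < n := by exact_mod_cast hn
  set μ : Measure (Fin n → Matrix.unitaryGroup (Fin 2) ℂ) := Measure.pi fun _ : Fin n => μ₂
    with hμdef
  set Gf : (Fin n → Matrix.unitaryGroup (Fin 2) ℂ) → ℝ := fun w =>
      ‖(star (prodState q₀ w) ⬝ᵥ
          (((U : Matrix (Fin n → Fin 2) (Fin n → Fin 2) ℂ)ᴴ *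
              (V : Matrix (Fin n → Fin 2) (Fin n → Fin 2) ℂ)) *ᵥ prodState q₀ w))‖ ^ 2
    with hGdef
  set tf : (Fin n → Matrix.unitaryGroup (Fin 2) ℂ) → Fin n → ℝ := fun w i =>
      (star (prodState q₀ w) ⬝ᵥ
          (((U : Matrix (Fin n → Fin 2) (Fin n → Fin 2) ℂ)ᴴ *
              (V : Matrix (Fin n → Fin 2) (Fin n → Fin 2) ℂ) *
              localProj (fun i => (w i : Matrix (Fin 2) (Fin 2) ℂ) *ᵥ q₀) i *
              (V : Matrix (Fin n → Fin 2) (Fin n → Fin 2) ℂ)ᴴ *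
              (U : Matrix (Fin n → Fin 2) (Fin n → Fin 2) ℂ)) *ᵥ prodState q₀ w)).re
    with htdef
  set Lf : (Fin n → Matrix.unitaryGroup (Fin 2) ℂ) → ℝ := fun w =>
      (1 / n : ℝ) * ∑ i, tf w i with hLdef
  -- pointwise facts
  have hpt := fun w => pointwise_facts q₀ hq₀ U V w
  have hG0 : ∀ w, 0 ≤ Gf w := fun w => (hpt w).1
  have hGt : ∀ w i, Gf w ≤ tf w i := fun w i => ((hpt w).2.1 i).1
  have ht1 : ∀ w i, tf w i ≤ 1 := fun w i => ((hpt w).2.1 i).2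
  have hsum : ∀ w, ∑ i, tf w i ≤ ((n : ℝ) - 1) + Gf w := fun w => (hpt w).2.2
  have hLw : ∀ w, Lf w = 1 / (n : ℝ) * ∑ i, tf w i := fun w => rfl
  have key1 : ∀ w, Gf w ≤ Lf w := by
    intro w
    have h1 : (n : ℝ) * Gf w ≤ ∑ i, tf w i := by
      calc (n : ℝ) * Gf w = ∑ _i : Fin n, Gf w := by
            rw [Finset.sum_const, Finset.card_univ, Fintype.card_fin, nsmul_eq_mul]
        _ ≤ ∑ i, tf w i := Finset.sum_le_sum fun i _ => hGt w i
    rw [hLw w, one_div, inv_mul_eq_div, le_div_iff₀ hn']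
    linarith
  have key2 : ∀ w, (n : ℝ) * Lf w ≤ ((n : ℝ) - 1) + Gf w := by
    intro w
    have : (n : ℝ) * Lf w = ∑ i, tf w i := by
      rw [hLw w]
      field_simp
    rw [this]
    exact hsum w
  have hL0 : ∀ w, 0 ≤ Lf w := by
    intro w
    rw [hLw w]
    have h0 : (0:ℝ) ≤ ∑ i, tf w i :=
      Finset.sum_nonneg fun i _ => le_trans (hG0 w) (hGt w i)
    positivity
  have hL1 : ∀ w, Lf w ≤ 1 := by
    intro w
    have h1 : ∑ i, tf w i ≤ (n : ℝ) := by
      calc ∑ i, tf w i ≤ ∑ _i : Fin n, (1:ℝ) := Finset.sum_le_sum fun i _ => ht1 w i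
        _ = (n : ℝ) := by simp
    rw [hLw w, one_div, inv_mul_eq_div, div_le_one hn']
    exact h1
  have hG1 : ∀ w, Gf w ≤ 1 := fun w => le_trans (key1 w) (hL1 w)
  -- continuity
  have hcψ : ∀ i : Fin n, Continuous fun w : Fin n → Matrix.unitaryGroup (Fin 2) ℂ =>
      ((w i : Matrix (Fin 2) (Fin 2) ℂ) *ᵥ q₀) := fun i =>
    (continuous_subtype_val.comp (continuous_apply i)).matrix_mulVec continuous_const
  have hcΨ : Continuous fun w : Fin n → Matrix.unitaryGroup (Fin 2) ℂ => prodState q₀ w :=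
    continuous_pi fun x => continuous_finset_prod _ fun i _ =>
      (continuous_apply (x i)).comp (hcψ i)
  have hcstar : Continuous fun w : Fin n → Matrix.unitaryGroup (Fin 2) ℂ =>
      star (prodState q₀ w) := hcΨ.star
  have hcG : Continuous Gf := by
    rw [hGdef]
    exact (continuous_norm.comp
      (hcstar.dotProduct (continuous_const.matrix_mulVec hcΨ))).pow 2
  have hcP : ∀ i : Fin n, Continuous fun w : Fin n → Matrix.unitaryGroup (Fin 2) ℂ =>
      localProj (fun j => (w j : Matrix (Fin 2) (Fin 2) ℂ) *ᵥ q₀) i := by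
    intro i
    apply continuous_matrix
    intro x y
    exact (((continuous_apply (x i)).comp (hcψ i)).mul
      (Complex.continuous_conj.comp ((continuous_apply (y i)).comp (hcψ i)))).mul
      continuous_const
  have hcL : Continuous Lf := by
    rw [hLdef]
    refine continuous_const.mul (continuous_finset_sum _ fun i _ => ?_)
    exact Complex.continuous_re.comp (hcstar.dotProduct
      ((((continuous_const.matrix_mul (hcP i)).matrix_mul
        continuous_const).matrix_mul continuous_const).matrix_mulVec hcΨ))
  -- integrability
  have hIG : Integrable Gf μ := by
    refine ⟨hcG.measurable.aestronglyMeasurable, ?_⟩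
    apply HasFiniteIntegral.of_bounded (C := 1)
    filter_upwards with w
    rw [Real.norm_eq_abs, abs_of_nonneg (hG0 w)]
    exact hG1 w
  have hIL : Integrable Lf μ := by
    refine ⟨hcL.measurable.aestronglyMeasurable, ?_⟩
    apply HasFiniteIntegral.of_bounded (C := 1)
    filter_upwards with w
    rw [Real.norm_eq_abs, abs_of_nonneg (hL0 w)]
    exact hL1 w
  have hInt1 : ∫ w, Gf w ∂μ ≤ ∫ w, Lf w ∂μ := integral_mono hIG hIL key1
  have hInt2 : ∫ w, (n : ℝ) * Lf w ∂μ ≤ ∫ w, (((n : ℝ) - 1) + Gf w) ∂μ :=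
    integral_mono (hIL.const_mul _) ((integrable_const (((n:ℝ) - 1))).add hIG) key2
  rw [integral_const_mul, integral_add (integrable_const _) hIG, integral_const,
    probReal_univ, smul_eq_mul, one_mul] at hInt2
  constructor
  · rw [hCGprod, hCLprod]
    linarith
  · rw [hCGprod, hCLprod]
    have : (n:ℝ) * (1 - ∫ w, Lf w ∂μ) = (n:ℝ) - (n:ℝ) * ∫ w, Lf w ∂μ := by ring
    linarith [this]
end

section
/- Let G be a d×d complex Hermitian matrix with G² = I, let ρ and O be arbitrary d×d complex matrices, and define f : ℝ → ℂ by f(θ) = Tr(O · exp(−iθG/2) · ρ · exp(iθG/2)). Then f is differentiable and for all θ, f′(θ) = (1/2)·(f(θ + π/2) − f(θ − π/2)). -/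
open Matrix Real

private lemma exp_invol {d : ℕ} (G : Matrix (Fin d) (Fin d) ℂ) (hG2 : G * G = 1) (z : ℂ) :
    NormedSpace.exp (z • G) =
      Complex.cosh z • (1 : Matrix (Fin d) (Fin d) ℂ) + Complex.sinh z • G := by
  letI : SeminormedRing (Matrix (Fin d) (Fin d) ℂ) := Matrix.linftyOpSemiNormedRing
  letI : NormedRing (Matrix (Fin d) (Fin d) ℂ) := Matrix.linftyOpNormedRing
  letI : NormedAlgebra ℂ (Matrix (Fin d) (Fin d) ℂ) := Matrix.linftyOpNormedAlgebra
  have hzs : ∀ w : ℂ, (∑' n : ℕ, ((n.factorial : ℂ))⁻¹ * w ^ n) = Complex.exp w := by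
    intro w
    rw [Complex.exp_eq_exp_ℂ, NormedSpace.exp_eq_tsum (𝕂 := ℂ)]
    simp [smul_eq_mul]
  have hsum : Summable fun n : ℕ => ((n.factorial : ℂ))⁻¹ • (z • G) ^ n :=
    NormedSpace.expSeries_summable' (𝕂 := ℂ) (z • G)
  have key : ∀ (w : ℂ) (X : Matrix (Fin d) (Fin d) ℂ),
      (∀ n : ℕ, (z • G) ^ n * X = w ^ n • X) →
      NormedSpace.exp (z • G) * X = Complex.exp w • X := by
    intro w X hX
    have hw : Summable fun n : ℕ => ((n.factorial : ℂ))⁻¹ * w ^ n := by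
      simpa [smul_eq_mul] using NormedSpace.expSeries_summable' (𝕂 := ℂ) w
    rw [NormedSpace.exp_eq_tsum (𝕂 := ℂ)]
    calc (∑' n : ℕ, ((n.factorial : ℂ))⁻¹ • (z • G) ^ n) * X
        = ∑' n : ℕ, (((n.factorial : ℂ))⁻¹ • (z • G) ^ n) * X := (hsum.tsum_mul_right X).symm
      _ = ∑' n : ℕ, (((n.factorial : ℂ))⁻¹ * w ^ n) • X := by
            refine tsum_congr fun n => ?_
            rw [smul_mul_assoc, hX n, smul_smul]
      _ = (∑' n : ℕ, ((n.factorial : ℂ))⁻¹ * w ^ n) • X := hw.tsum_smul_const X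
      _ = Complex.exp w • X := by rw [hzs w]
  have hP : G * (1 + G) = 1 + G := by
    rw [mul_add, mul_one, hG2, add_comm]
  have hQ : G * (1 - G) = -(1 - G) := by
    rw [mul_sub, mul_one, hG2, neg_sub]
  have hGpP : ∀ n : ℕ, G ^ n * (1 + G) = 1 + G := by
    intro n
    induction n with
    | zero => simp
    | succ n ih => rw [pow_succ, mul_assoc, hP, ih]
  have hGpQ : ∀ n : ℕ, G ^ n * (1 - G) = ((-1 : ℂ) ^ n) • (1 - G) := by
    intro n
    induction n with
    | zero => simp
    | succ n ih =>
        rw [pow_succ, mul_assoc, hQ, mul_neg, ih, pow_succ, mul_neg_one, neg_smul]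
  have h1 : NormedSpace.exp (z • G) * (1 + G) = Complex.exp z • (1 + G) := by
    apply key
    intro n
    rw [smul_pow, smul_mul_assoc, hGpP n]
  have h2 : NormedSpace.exp (z • G) * (1 - G) = Complex.exp (-z) • (1 - G) := by
    apply key
    intro n
    rw [smul_pow, smul_mul_assoc, hGpQ n, smul_smul]
    congr 1
    rw [neg_pow]
    ring
  have h12 : ((1 : Matrix (Fin d) (Fin d) ℂ) + G) + (1 - G) = (2 : ℂ) • 1 := by
    rw [two_smul]
    abel
  calc NormedSpace.exp (z • G)
      = NormedSpace.exp (z • G) * ((1 / 2 : ℂ) • ((1 + G) + (1 - G))) := by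
        rw [h12, smul_smul]
        norm_num
    _ = (1 / 2 : ℂ) • (NormedSpace.exp (z • G) * (1 + G))
        + (1 / 2 : ℂ) • (NormedSpace.exp (z • G) * (1 - G)) := by
        rw [mul_smul_comm, mul_add, smul_add]
    _ = Complex.cosh z • 1 + Complex.sinh z • G := by
        rw [h1, h2, Complex.cosh, Complex.sinh]
        rw [smul_smul, smul_smul, smul_add, smul_sub]
        match_scalars <;> ring

/-- parameter-shift rule: for Hermitian `G` with `G² = I` and
`f(θ) = Tr(O · exp(−iθG/2) · ρ · exp(iθG/2))`, the function `f` is differentiable with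
`f′(θ) = (1/2)·(f(θ + π/2) − f(θ − π/2))`. -/
theorem parameter_shift_rule (d : ℕ)
    (G ρ O : Matrix (Fin d) (Fin d) ℂ)
    (hG : G.IsHermitian) (hG2 : G * G = 1)
    (f : ℝ → ℂ)
    (hf : f = fun θ : ℝ =>
      (O * NormedSpace.exp ((-(Complex.I * (θ : ℂ)) / 2) • G) * ρ *
        NormedSpace.exp (((Complex.I * (θ : ℂ)) / 2) • G)).trace) :
    Differentiable ℝ f ∧
      ∀ θ : ℝ, HasDerivAt f ((1 / 2) * (f (θ + π / 2) - f (θ - π / 2))) θ := by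
  have t0 : ℂ := (O * ρ).trace
  have hfeq : f = fun θ : ℝ =>
      ((O * ρ).trace + (O * G * ρ * G).trace) / 2
        + (((O * ρ).trace - (O * G * ρ * G).trace) / 2) * Complex.cos (θ : ℂ)
        + (Complex.I * ((O * ρ * G).trace - (O * G * ρ).trace) / 2) * Complex.sin (θ : ℂ) := by
    rw [hf]
    funext θ
    have e1 : (-(Complex.I * (θ : ℂ)) / 2 : ℂ) = (-((θ : ℂ) / 2)) * Complex.I := by ring
    have e2 : ((Complex.I * (θ : ℂ)) / 2 : ℂ) = ((θ : ℂ) / 2) * Complex.I := by ring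
    rw [e1, e2, exp_invol G hG2, exp_invol G hG2,
      Complex.cosh_mul_I, Complex.sinh_mul_I, Complex.cosh_mul_I, Complex.sinh_mul_I,
      Complex.cos_neg, Complex.sin_neg]
    have hc2 : Complex.cos (θ : ℂ) = 2 * Complex.cos ((θ : ℂ) / 2) ^ 2 - 1 := by
      have := Complex.cos_two_mul ((θ : ℂ) / 2)
      rw [show 2 * ((θ : ℂ) / 2) = (θ : ℂ) by ring] at this
      exact this
    have hs2 : Complex.sin (θ : ℂ) = 2 * Complex.sin ((θ : ℂ) / 2) * Complex.cos ((θ : ℂ) / 2) := by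
      have := Complex.sin_two_mul ((θ : ℂ) / 2)
      rw [show 2 * ((θ : ℂ) / 2) = (θ : ℂ) by ring] at this
      exact this
    rw [hc2, hs2]
    simp only [Matrix.mul_add, Matrix.add_mul, Matrix.mul_sub, Matrix.sub_mul,
      Matrix.mul_smul, Matrix.smul_mul, Matrix.mul_one, Matrix.one_mul,
      Matrix.trace_add, Matrix.trace_sub, Matrix.trace_smul, smul_eq_mul, neg_smul,
      Matrix.trace_neg, Matrix.neg_mul, Matrix.mul_neg, Matrix.mul_assoc]
    linear_combination (O * (G * (ρ * G))).trace * Complex.sin_sq_add_cos_sq ((θ : ℂ) / 2)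
      - Complex.sin ((θ : ℂ) / 2) ^ 2 * (O * (G * (ρ * G))).trace * Complex.I_sq
  have hder : ∀ θ : ℝ, HasDerivAt f
      (-(((O * ρ).trace - (O * G * ρ * G).trace) / 2) * Complex.sin (θ : ℂ)
        + (Complex.I * ((O * ρ * G).trace - (O * G * ρ).trace) / 2) * Complex.cos (θ : ℂ)) θ := by
    intro θ
    rw [hfeq]
    have hc : HasDerivAt (fun t : ℝ => Complex.cos (t : ℂ)) (-Complex.sin (θ : ℂ)) θ :=
      (Complex.hasDerivAt_cos (θ : ℂ)).comp_ofReal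
    have hs : HasDerivAt (fun t : ℝ => Complex.sin (t : ℂ)) (Complex.cos (θ : ℂ)) θ :=
      (Complex.hasDerivAt_sin (θ : ℂ)).comp_ofReal
    have h := ((hc.const_mul (((O * ρ).trace - (O * G * ρ * G).trace) / 2)).const_add
        (((O * ρ).trace + (O * G * ρ * G).trace) / 2)).add
      (hs.const_mul (Complex.I * ((O * ρ * G).trace - (O * G * ρ).trace) / 2))
    convert h using 1
    · rfl
    · rfl
    · ring
  refine ⟨fun θ => (hder θ).differentiableAt, fun θ => ?_⟩
  have hval : (1 / 2 : ℂ) * (f (θ + π / 2) - f (θ - π / 2))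
      = -(((O * ρ).trace - (O * G * ρ * G).trace) / 2) * Complex.sin (θ : ℂ)
        + (Complex.I * ((O * ρ * G).trace - (O * G * ρ).trace) / 2) * Complex.cos (θ : ℂ) := by
    rw [hfeq]
    push_cast
    rw [Complex.cos_add, Complex.sin_add, Complex.cos_sub, Complex.sin_sub,
      Complex.cos_pi_div_two, Complex.sin_pi_div_two]
    ring
  rw [hval]
  exact hder θ
end
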